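/- arXiv:1812.04762 — 3 statements merged into one kernel-verified Lean document; each statement's English description precedes it below -/
import Mathlib

section
/- In the Golub–Kahan bidiagonalization setup, for every k with 1 ≤ k ≤ n−1 one has γ_k^{lsqr} < γ_k^{cgme} < γ_{k−1}^{lsqr}; that is, the spectral-norm error of the rank-k approximation P_k P_kᵀ A to A lies strictly between the LSQR rank-k error γ_k^{lsqr} and the LSQR rank-(k−1) error γ_{k−1}^{lsqr}. -/
open Matrix

/-- Spectral norm (largest singular value) of a real matrix. -/
noncomputable def specNorm {a b : ℕ} (M : Matrix (Fin a) (Fin b) ℝ) : ℝ :=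
  ‖LinearMap.toContinuousLinearMap (Matrix.toEuclideanLin M)‖

/-- The `j`-th largest singular value of a real matrix (`j ≥ 1`), characterized via the
Eckart–Young theorem as the minimal spectral-norm distance to matrices of rank `< j`;
it is `0` when `j` exceeds the smaller dimension. -/
noncomputable def singVal {a b : ℕ} (M : Matrix (Fin a) (Fin b) ℝ) (j : ℕ) : ℝ :=
  sInf {r : ℝ | ∃ D : Matrix (Fin a) (Fin b) ℝ, D.rank < j ∧ r = specNorm (M - D)}

/-- The matrix of the first `k` columns of `M`. -/
def colSub {a b : ℕ} (M : Matrix (Fin a) (Fin b) ℝ) (k : ℕ) (hk : k ≤ b) :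
    Matrix (Fin a) (Fin k) ℝ :=
  M.submatrix id fun j => ⟨j.1, lt_of_lt_of_le j.2 hk⟩

/-- The leading `r × c` submatrix of `M`. -/
def subUL {a b : ℕ} (M : Matrix (Fin a) (Fin b) ℝ) (r c : ℕ) (hr : r ≤ a) (hc : c ≤ b) :
    Matrix (Fin r) (Fin c) ℝ :=
  M.submatrix (fun i => ⟨i.1, lt_of_lt_of_le i.2 hr⟩) (fun j => ⟨j.1, lt_of_lt_of_le j.2 hc⟩)


namespace SpecAux


variable {a b c : ℕ}

noncomputable def toCLM (M : Matrix (Fin a) (Fin b) ℝ) :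
    EuclideanSpace ℝ (Fin b) →L[ℝ] EuclideanSpace ℝ (Fin a) :=
  LinearMap.toContinuousLinearMap (Matrix.toEuclideanLin M)

lemma specNorm_eq (M : Matrix (Fin a) (Fin b) ℝ) : specNorm M = ‖toCLM M‖ := rfl

lemma toCLM_apply (M : Matrix (Fin a) (Fin b) ℝ) (u : Fin b → ℝ) :
    toCLM M ((WithLp.equiv 2 (Fin b → ℝ)).symm u) =
      (WithLp.equiv 2 (Fin a → ℝ)).symm (M *ᵥ u) := by
  rfl

lemma inner_symm (u v : Fin a → ℝ) :
    (inner ℝ ((WithLp.equiv 2 (Fin a → ℝ)).symm u) ((WithLp.equiv 2 (Fin a → ℝ)).symm v) : ℝ)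
      = u ⬝ᵥ v := by
  show v ⬝ᵥ star u = u ⬝ᵥ v
  rw [star_trivial, dotProduct_comm]

lemma norm_symm_sq (u : Fin a → ℝ) :
    ‖(WithLp.equiv 2 (Fin a → ℝ)).symm u‖ ^ 2 = u ⬝ᵥ u := by
  rw [← real_inner_self_eq_norm_sq, inner_symm]

lemma norm_toCLM_sq (M : Matrix (Fin a) (Fin b) ℝ) (x : EuclideanSpace ℝ (Fin b)) :
    ‖toCLM M x‖ ^ 2 = (M *ᵥ (WithLp.equiv 2 (Fin b → ℝ)) x) ⬝ᵥ (M *ᵥ (WithLp.equiv 2 (Fin b → ℝ)) x) := by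
  rw [← norm_symm_sq, ← toCLM_apply]
  simp

lemma dot_mulVec_le (M : Matrix (Fin a) (Fin b) ℝ) (u : Fin b → ℝ) :
    (M *ᵥ u) ⬝ᵥ (M *ᵥ u) ≤ specNorm M ^ 2 * (u ⬝ᵥ u) := by
  have h1 := norm_symm_sq (a := a) (M *ᵥ u)
  have h2 := norm_symm_sq (a := b) u
  rw [← h1, ← h2, ← toCLM_apply, specNorm_eq]
  calc ‖toCLM M ((WithLp.equiv 2 (Fin b → ℝ)).symm u)‖ ^ 2
      ≤ (‖toCLM M‖ * ‖(WithLp.equiv 2 (Fin b → ℝ)).symm u‖) ^ 2 := by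
        apply pow_le_pow_left₀ (norm_nonneg _) ((toCLM M).le_opNorm _)
    _ = _ := by ring

lemma specNorm_nonneg (M : Matrix (Fin a) (Fin b) ℝ) : 0 ≤ specNorm M := norm_nonneg _

lemma lt_specNorm (M : Matrix (Fin a) (Fin b) ℝ) {u : Fin b → ℝ} (hu : u ⬝ᵥ u = 1)
    {t : ℝ} (ht : 0 ≤ t) (h : t ^ 2 < (M *ᵥ u) ⬝ᵥ (M *ᵥ u)) : t < specNorm M := by
  have := dot_mulVec_le M u
  rw [hu, mul_one] at this
  exact lt_of_pow_lt_pow_left₀ 2 (specNorm_nonneg M) (lt_of_lt_of_le h this)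

lemma specNorm_pos (M : Matrix (Fin a) (Fin b) ℝ) (i : Fin a) (j : Fin b)
    (h : M i j ≠ 0) : 0 < specNorm M := by
  apply lt_specNorm M (u := Pi.single j 1) (by simp [dotProduct, Pi.single_apply]) le_rfl
  rw [show M *ᵥ Pi.single j 1 = (fun i' => M i' j * 1) from funext fun i' => by simp [Matrix.mulVec, dotProduct, Pi.single_apply]]
  have : (fun i' => M i' j * 1) ⬝ᵥ (fun i' => M i' j * 1) = ∑ i', (M i' j) ^ 2 := by
    simp [dotProduct, sq]
  rw [this]
  norm_num
  exact Finset.sum_pos' (fun i' _ => sq_nonneg _) ⟨i, Finset.mem_univ i, by positivity⟩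


lemma specNorm_eq_of_dot (M₁ : Matrix (Fin a) (Fin c) ℝ) (M₂ : Matrix (Fin b) (Fin c) ℝ)
    (h : ∀ u : Fin c → ℝ, (M₁ *ᵥ u) ⬝ᵥ (M₁ *ᵥ u) = (M₂ *ᵥ u) ⬝ᵥ (M₂ *ᵥ u)) :
    specNorm M₁ = specNorm M₂ := by
  have key : ∀ x : EuclideanSpace ℝ (Fin c), ‖toCLM M₁ x‖ = ‖toCLM M₂ x‖ := by
    intro x
    have h1 := norm_toCLM_sq M₁ x
    have h2 := norm_toCLM_sq M₂ x
    have : ‖toCLM M₁ x‖ ^ 2 = ‖toCLM M₂ x‖ ^ 2 := by rw [h1, h2, h]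
    have := congrArg Real.sqrt this
    rwa [Real.sqrt_sq (norm_nonneg _), Real.sqrt_sq (norm_nonneg _)] at this
  rw [specNorm_eq, specNorm_eq]
  apply le_antisymm
  · apply ContinuousLinearMap.opNorm_le_bound _ (norm_nonneg _)
    intro x; rw [key x]; exact (toCLM M₂).le_opNorm x
  · apply ContinuousLinearMap.opNorm_le_bound _ (norm_nonneg _)
    intro x; rw [← key x]; exact (toCLM M₁).le_opNorm x

lemma specNorm_transpose (M : Matrix (Fin a) (Fin b) ℝ) : specNorm Mᵀ = specNorm M := by
  have aux : ∀ (a b : ℕ) (M : Matrix (Fin a) (Fin b) ℝ), specNorm Mᵀ ≤ specNorm M := by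
    intro a b M
    rw [specNorm_eq, specNorm_eq]
    apply ContinuousLinearMap.opNorm_le_bound _ (norm_nonneg _)
    intro x
    rcases le_or_gt ‖toCLM Mᵀ x‖ 0 with h | h
    · exact le_trans h (by positivity)
    · have key : ‖toCLM Mᵀ x‖ ^ 2 ≤ ‖toCLM M‖ * ‖x‖ * ‖toCLM Mᵀ x‖ := by
        set u : Fin a → ℝ := (WithLp.equiv 2 (Fin a → ℝ)) x with hu
        have h1 : ‖toCLM Mᵀ x‖ ^ 2 = (Mᵀ *ᵥ u) ⬝ᵥ (Mᵀ *ᵥ u) := norm_toCLM_sq Mᵀ x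
        have h2 : (Mᵀ *ᵥ u) ⬝ᵥ (Mᵀ *ᵥ u) = u ⬝ᵥ (M *ᵥ (Mᵀ *ᵥ u)) := by
          rw [Matrix.mulVec_transpose, Matrix.dotProduct_mulVec]
        have h3 : u ⬝ᵥ (M *ᵥ (Mᵀ *ᵥ u)) =
            (inner ℝ x (toCLM M ((WithLp.equiv 2 (Fin b → ℝ)).symm (Mᵀ *ᵥ u))) : ℝ) := by
          rw [toCLM_apply, ← inner_symm]
          congr 1
        have h4 : (inner ℝ x (toCLM M ((WithLp.equiv 2 (Fin b → ℝ)).symm (Mᵀ *ᵥ u))) : ℝ)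
            ≤ ‖x‖ * ‖toCLM M ((WithLp.equiv 2 (Fin b → ℝ)).symm (Mᵀ *ᵥ u))‖ :=
          real_inner_le_norm _ _
        have h5 : ‖toCLM M ((WithLp.equiv 2 (Fin b → ℝ)).symm (Mᵀ *ᵥ u))‖
            ≤ ‖toCLM M‖ * ‖(WithLp.equiv 2 (Fin b → ℝ)).symm (Mᵀ *ᵥ u)‖ :=
          (toCLM M).le_opNorm _
        have h6 : ‖(WithLp.equiv 2 (Fin b → ℝ)).symm (Mᵀ *ᵥ u)‖ = ‖toCLM Mᵀ x‖ := by
          rw [← toCLM_apply]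
          simp [hu]
        calc ‖toCLM Mᵀ x‖ ^ 2 = u ⬝ᵥ (M *ᵥ (Mᵀ *ᵥ u)) := by rw [h1, h2]
          _ ≤ ‖x‖ * ‖toCLM M ((WithLp.equiv 2 (Fin b → ℝ)).symm (Mᵀ *ᵥ u))‖ := by rw [h3]; exact h4
          _ ≤ ‖x‖ * (‖toCLM M‖ * ‖toCLM Mᵀ x‖) := by
              apply mul_le_mul_of_nonneg_left _ (norm_nonneg _)
              rw [← h6]; exact h5
          _ = ‖toCLM M‖ * ‖x‖ * ‖toCLM Mᵀ x‖ := by ring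
      rw [pow_two] at key
      calc ‖toCLM Mᵀ x‖ = ‖toCLM Mᵀ x‖ * ‖toCLM Mᵀ x‖ / ‖toCLM Mᵀ x‖ := by field_simp
        _ ≤ ‖toCLM M‖ * ‖x‖ * ‖toCLM Mᵀ x‖ / ‖toCLM Mᵀ x‖ := by
            exact div_le_div_of_nonneg_right key h.le
        _ = ‖toCLM M‖ * ‖x‖ := by field_simp
  apply le_antisymm (aux _ _ M)
  have := aux _ _ Mᵀ
  rwa [Matrix.transpose_transpose] at this

lemma mulVec_dot_mulVec_orth {P : Matrix (Fin a) (Fin b) ℝ} (hP : Pᵀ * P = 1)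
    (x y : Fin b → ℝ) : (P *ᵥ x) ⬝ᵥ (P *ᵥ y) = x ⬝ᵥ y := by
  have e1 : P *ᵥ x = x ᵥ* Pᵀ := by
    rw [← Matrix.mulVec_transpose, Matrix.transpose_transpose]
  rw [e1, Matrix.dotProduct_mulVec, Matrix.vecMul_vecMul, hP, Matrix.vecMul_one]

lemma transpose_sq : True := trivial

lemma isSelfAdjoint_toCLM (N : Matrix (Fin a) (Fin a) ℝ) (hN : Nᵀ = N) :
    IsSelfAdjoint (toCLM N) := by
  rw [ContinuousLinearMap.isSelfAdjoint_iff_isSymmetric]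
  intro x y
  have hx : x = (WithLp.equiv 2 (Fin a → ℝ)).symm ((WithLp.equiv 2 (Fin a → ℝ)) x) := by simp
  have hy : y = (WithLp.equiv 2 (Fin a → ℝ)).symm ((WithLp.equiv 2 (Fin a → ℝ)) y) := by simp
  rw [hx, hy]
  set u := (WithLp.equiv 2 (Fin a → ℝ)) x
  set v := (WithLp.equiv 2 (Fin a → ℝ)) y
  show (inner ℝ (toCLM N ((WithLp.equiv 2 (Fin a → ℝ)).symm u)) ((WithLp.equiv 2 (Fin a → ℝ)).symm v) : ℝ) =
    (inner ℝ ((WithLp.equiv 2 (Fin a → ℝ)).symm u) (toCLM N ((WithLp.equiv 2 (Fin a → ℝ)).symm v)) : ℝ)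
  rw [toCLM_apply, toCLM_apply, inner_symm, inner_symm]
  rw [Matrix.dotProduct_mulVec, ← Matrix.mulVec_transpose, hN, dotProduct_comm]

lemma reApply_eq (M : Matrix (Fin a) (Fin b) ℝ) (x : EuclideanSpace ℝ (Fin a)) :
    (toCLM (M * Mᵀ)).reApplyInnerSelf x = ‖toCLM Mᵀ x‖ ^ 2 := by
  rw [ContinuousLinearMap.reApplyInnerSelf_apply]
  have hx : x = (WithLp.equiv 2 (Fin a → ℝ)).symm ((WithLp.equiv 2 (Fin a → ℝ)) x) := by simp
  rw [norm_toCLM_sq]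
  conv_lhs => rw [hx]
  set u := (WithLp.equiv 2 (Fin a → ℝ)) x
  show (inner ℝ (toCLM (M * Mᵀ) ((WithLp.equiv 2 (Fin a → ℝ)).symm u)) ((WithLp.equiv 2 (Fin a → ℝ)).symm u) : ℝ) = _
  rw [toCLM_apply, inner_symm, ← Matrix.mulVec_mulVec, dotProduct_comm,
    Matrix.dotProduct_mulVec, Matrix.mulVec_transpose]

lemma exists_eigvec (ha : 0 < a) (M : Matrix (Fin a) (Fin b) ℝ) :
    ∃ u : Fin a → ℝ, u ⬝ᵥ u = 1 ∧ (M * Mᵀ) *ᵥ u = (specNorm Mᵀ ^ 2) • u := by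
  set T := toCLM (M * Mᵀ) with hTdef
  have hT : IsSelfAdjoint T := by
    apply isSelfAdjoint_toCLM
    rw [Matrix.transpose_mul, Matrix.transpose_transpose]
  have hsph : (Metric.sphere (0 : EuclideanSpace ℝ (Fin a)) 1).Nonempty := by
    refine ⟨EuclideanSpace.single ⟨0, ha⟩ (1 : ℝ), ?_⟩
    simp [EuclideanSpace.norm_single]
  obtain ⟨x₀, hx₀S, hmax⟩ := (isCompact_sphere (0 : EuclideanSpace ℝ (Fin a)) 1).exists_isMaxOn
    hsph T.reApplyInnerSelf_continuous.continuousOn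
  have hx₀n : ‖x₀‖ = 1 := by simpa using hx₀S
  have hx₀ : x₀ ≠ 0 := by intro h; rw [h] at hx₀n; simp at hx₀n
  have hextr : IsLocalExtrOn T.reApplyInnerSelf (Metric.sphere (0 : EuclideanSpace ℝ (Fin a)) ‖x₀‖) x₀ := by
    rw [hx₀n]; exact Or.inr hmax.localize
  have heig := hT.eq_smul_self_of_isLocalExtrOn_real hextr
  set c := T.rayleighQuotient x₀ with hc
  have hcval : c = ‖toCLM Mᵀ x₀‖ ^ 2 := by
    rw [hc, ContinuousLinearMap.rayleighQuotient, hx₀n, ← reApply_eq M x₀]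
    simp [hTdef]
  -- c = (specNorm Mᵀ)^2
  have hcnn : 0 ≤ c := by rw [hcval]; positivity
  have hub : ∀ x : EuclideanSpace ℝ (Fin a), ‖x‖ = 1 → ‖toCLM Mᵀ x‖ ^ 2 ≤ c := by
    intro x hx
    have := hmax (by simpa using hx)
    rw [← reApply_eq M x, hcval, ← reApply_eq M x₀]
    exact this
  have hnorm : specNorm Mᵀ ^ 2 = c := by
    apply le_antisymm
    · have h1 : specNorm Mᵀ ≤ Real.sqrt c := by
        rw [specNorm_eq]
        apply ContinuousLinearMap.opNorm_le_bound _ (Real.sqrt_nonneg _)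
        intro x
        rcases eq_or_ne x 0 with rfl | hx
        · simp
        · have hxn : ‖x‖ ≠ 0 := norm_ne_zero_iff.mpr hx
          have hy : ‖(‖x‖⁻¹ • x)‖ = 1 := by
            rw [norm_smul, norm_inv, norm_norm]
            field_simp
          have := hub _ hy
          have h2 : ‖toCLM Mᵀ (‖x‖⁻¹ • x)‖ ≤ Real.sqrt c := by
            rw [← Real.sqrt_sq (norm_nonneg (toCLM Mᵀ (‖x‖⁻¹ • x)))]
            exact Real.sqrt_le_sqrt this
          rw [_root_.map_smul, norm_smul, norm_inv, norm_norm] at h2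
          calc ‖toCLM Mᵀ x‖ = ‖x‖ * (‖x‖⁻¹ * ‖toCLM Mᵀ x‖) := by field_simp
            _ ≤ Real.sqrt c * ‖x‖ := by
                rw [mul_comm (Real.sqrt c) ‖x‖]
                exact mul_le_mul_of_nonneg_left h2 (norm_nonneg x)
      calc specNorm Mᵀ ^ 2 ≤ Real.sqrt c ^ 2 := by
            apply pow_le_pow_left₀ (by rw [specNorm_eq]; exact norm_nonneg _) h1
        _ = c := Real.sq_sqrt hcnn
    · rw [hcval]
      have := (toCLM Mᵀ).le_opNorm x₀
      rw [hx₀n, mul_one] at this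
      rw [specNorm_eq]
      exact pow_le_pow_left₀ (norm_nonneg _) this 2
  refine ⟨(WithLp.equiv 2 (Fin a → ℝ)) x₀, ?_, ?_⟩
  · have := norm_symm_sq ((WithLp.equiv 2 (Fin a → ℝ)) x₀)
    simp only [Equiv.symm_apply_apply] at this
    rw [← this, hx₀n]; norm_num
  · rw [hnorm]
    have hx : x₀ = (WithLp.equiv 2 (Fin a → ℝ)).symm ((WithLp.equiv 2 (Fin a → ℝ)) x₀) := by simp
    have h1 : T x₀ = (WithLp.equiv 2 (Fin a → ℝ)).symm ((M * Mᵀ) *ᵥ (WithLp.equiv 2 (Fin a → ℝ)) x₀) := by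
      conv_lhs => rw [hx]
      exact toCLM_apply _ _
    have h2 := heig
    rw [h1] at h2
    have := congrArg (WithLp.equiv 2 (Fin a → ℝ)) h2
    simp only [Equiv.apply_symm_apply] at this
    rw [this]
    rfl


lemma exists_eigvec' {a b : ℕ} (ha : 0 < a) (M : Matrix (Fin a) (Fin b) ℝ) :
    ∃ u : Fin a → ℝ, u ⬝ᵥ u = 1 ∧ (M * Mᵀ) *ᵥ u = (specNorm M ^ 2) • u := by
  obtain ⟨u, h1, h2⟩ := exists_eigvec ha M
  rw [specNorm_transpose] at h2
  exact ⟨u, h1, h2⟩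

lemma specNorm_orth_left {a b c : ℕ} {P : Matrix (Fin a) (Fin b) ℝ} (hP : Pᵀ * P = 1)
    (M : Matrix (Fin b) (Fin c) ℝ) : specNorm (P * M) = specNorm M := by
  apply specNorm_eq_of_dot
  intro u
  rw [← Matrix.mulVec_mulVec]
  exact mulVec_dot_mulVec_orth hP _ _

lemma specNorm_orth_right {a b : ℕ} {Q : Matrix (Fin b) (Fin b) ℝ} (hQ : Qᵀ * Q = 1)
    (M : Matrix (Fin a) (Fin b) ℝ) : specNorm (M * Qᵀ) = specNorm M := by
  rw [← specNorm_transpose (M * Qᵀ), Matrix.transpose_mul, Matrix.transpose_transpose,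
    specNorm_orth_left hQ, specNorm_transpose]

lemma sum_eq_single_term {d : ℕ} (f : Fin d → ℝ) (j0 : Fin d)
    (h : ∀ j, j ≠ j0 → f j = 0) : ∑ j, f j = f j0 :=
  Finset.sum_eq_single_of_mem j0 (Finset.mem_univ _) (fun j _ hj => h j hj)



lemma mulVec_apply' {a b : ℕ} (M : Matrix (Fin a) (Fin b) ℝ) (x : Fin b → ℝ) (i : Fin a) :
    (M *ᵥ x) i = ∑ j, M i j * x j := rfl

lemma claim1 (n k : ℕ) (hn : 2 ≤ n) (hk1 : 1 ≤ k) (hk2 : k ≤ n - 1)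
    (α β : Fin n → ℝ) (hα : ∀ i, 0 < α i) (hβ : ∀ i, 0 < β i)
    (X Y : Matrix (Fin (n+1)) (Fin n) ℝ)
    (hX : ∀ i j, X i j = if k ≤ (j : ℕ) then
      (if (i:ℕ) = (j:ℕ) then α j else if (i:ℕ) = (j:ℕ)+1 then β j else 0) else 0)
    (hY : ∀ i j, Y i j = if k ≤ (i : ℕ) then
      (if (i:ℕ) = (j:ℕ) then α j else if (i:ℕ) = (j:ℕ)+1 then β j else 0) else 0) :
    specNorm X < specNorm Y := by
  have hkn : k < n := by omega
  set kF : Fin n := ⟨k, hkn⟩ with hkF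
  set kS : Fin (n+1) := ⟨k, by omega⟩ with hkS
  set k1F : Fin n := ⟨k-1, by omega⟩ with hk1F
  have hkSv : (kS:ℕ) = k := rfl
  have hkFv : (kF:ℕ) = k := rfl
  have hk1Fv : (k1F:ℕ) = k-1 := rfl
  have hXpos : 0 < specNorm X := by
    apply specNorm_pos X kS kF
    have : X kS kF = α kF := by
      rw [hX]
      rw [if_pos (le_refl k), if_pos rfl]
    rw [this]; exact (hα _).ne'
  obtain ⟨u, hu1, hu2⟩ := exists_eigvec' (by omega : 0 < n+1) X
  set v := Xᵀ *ᵥ u with hvdef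
  have heq : X *ᵥ v = (specNorm X ^ 2) • u := by
    rw [hvdef, Matrix.mulVec_mulVec]; exact hu2
  have hv : ∀ j : Fin n, v j = if k ≤ (j:ℕ) then
      α j * u ⟨(j:ℕ), Nat.lt_succ_of_lt j.isLt⟩ + β j * u ⟨(j:ℕ)+1, Nat.succ_lt_succ j.isLt⟩
      else 0 := by
    intro j
    have hvj : v j = ∑ i, X i j * u i := by
      rw [hvdef, mulVec_apply']
      exact Finset.sum_congr rfl (fun i _ => by rw [Matrix.transpose_apply])
    by_cases hkj : k ≤ (j:ℕ)
    · rw [hvj, if_pos hkj]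
      have hsummand : ∀ i : Fin (n+1), X i j * u i =
          (if i = ⟨(j:ℕ), Nat.lt_succ_of_lt j.isLt⟩ then α j * u i else 0) +
          (if i = ⟨(j:ℕ)+1, Nat.succ_lt_succ j.isLt⟩ then β j * u i else 0) := by
        intro i
        rw [hX, if_pos hkj]
        by_cases h1 : (i:ℕ) = (j:ℕ)
        · rw [if_pos h1, if_pos (Fin.ext h1), if_neg (by rw [Fin.ext_iff]; simp; omega)]
          ring
        · rw [if_neg h1]
          by_cases h2 : (i:ℕ) = (j:ℕ)+1
          · rw [if_pos h2, if_neg (by rw [Fin.ext_iff]; simp; omega), if_pos (Fin.ext h2)]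
            ring
          · rw [if_neg h2, if_neg (by rw [Fin.ext_iff]; simp; omega),
              if_neg (by rw [Fin.ext_iff]; simp; omega)]
            ring
      rw [Finset.sum_congr rfl (fun i _ => hsummand i), Finset.sum_add_distrib]
      simp [Finset.sum_ite_eq']
    · rw [hvj, if_neg hkj]
      apply Finset.sum_eq_zero
      intro i _
      rw [hX, if_neg hkj, zero_mul]
  have hl2 : (0:ℝ) < specNorm X ^ 2 := by positivity
  -- the key nonvanishing
  have hukS : u kS ≠ 0 := by
    intro h0
    have hlow : ∀ i : Fin (n+1), (i:ℕ) < k → u i = 0 := by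
      intro i hi
      have hXrow : (X *ᵥ v) i = 0 := by
        rw [mulVec_apply']
        apply Finset.sum_eq_zero
        intro j _
        rw [hX]
        by_cases hkj : k ≤ (j:ℕ)
        · rw [if_pos hkj, if_neg (by omega), if_neg (by omega), zero_mul]
        · rw [if_neg hkj, zero_mul]
      have := congrFun heq i
      rw [hXrow, Pi.smul_apply, smul_eq_mul] at this
      have := this.symm
      rcases mul_eq_zero.mp this with h | h
      · exact absurd h (by positivity)
      · exact h
    have hstep : ∀ t : ℕ, k ≤ t → t < n → (∀ i : Fin (n+1), (i:ℕ) ≤ t → u i = 0) →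
        ∀ i : Fin (n+1), (i:ℕ) ≤ t+1 → u i = 0 := by
      intro t hkt htn ih i hi
      rcases Nat.lt_or_ge (i:ℕ) (t+1) with h | h
      · exact ih i (by omega)
      have hieq : (i:ℕ) = t+1 := by omega
      have hvz : ∀ j : Fin n, (j:ℕ) < t → v j = 0 := by
        intro j hj
        rw [hv j]
        split_ifs with hkj
        · rw [ih ⟨(j:ℕ), _⟩ (by simpa using (le_of_lt hj)),
            ih ⟨(j:ℕ)+1, _⟩ (by simp; omega)]
          ring
        · rfl
      have hXvt : (X *ᵥ v) ⟨t, by omega⟩ = α ⟨t, htn⟩ * v ⟨t, htn⟩ := by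
        rw [mulVec_apply']
        rw [sum_eq_single_term _ ⟨t, htn⟩ ?_]
        · rw [hX, if_pos (by simpa using hkt), if_pos (by simp)]
        · intro j hj
          rcases Nat.lt_or_ge (j:ℕ) t with h1 | h1
          · rw [hvz j h1, mul_zero]
          · have h2 : t < (j:ℕ) := by
              rcases Nat.eq_or_lt_of_le h1 with h3 | h3
              · exact absurd (Fin.ext h3.symm) hj
              · exact h3
            rw [hX]
            by_cases c1 : k ≤ (j:ℕ)
            · rw [if_pos c1, if_neg (by simp; omega), if_neg (by simp; omega), zero_mul]
            · rw [if_neg c1, zero_mul]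
      have e1 := congrFun heq ⟨t, by omega⟩
      rw [hXvt, Pi.smul_apply, smul_eq_mul, ih ⟨t, by omega⟩ (by simp), mul_zero] at e1
      have hvt : v ⟨t, htn⟩ = 0 := by
        rcases mul_eq_zero.mp e1 with h' | h'
        · exact absurd h' (hα _).ne'
        · exact h'
      have e2 := hv ⟨t, htn⟩
      rw [hvt, if_pos (by simpa using hkt)] at e2
      rw [ih ⟨t, _⟩ (by simp), mul_zero, zero_add] at e2
      have hut1 : u ⟨t+1, by omega⟩ = 0 := by
        rcases mul_eq_zero.mp e2.symm with h' | h'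
        · exact absurd h' (hβ _).ne'
        · exact h'
      have : i = ⟨t+1, by omega⟩ := Fin.ext hieq
      rw [this]; exact hut1
    have base : ∀ i : Fin (n+1), (i:ℕ) ≤ k → u i = 0 := by
      intro i hi
      rcases Nat.lt_or_ge (i:ℕ) k with h | h
      · exact hlow i h
      · have : i = kS := Fin.ext (by omega)
        rw [this]; exact h0
    have H : ∀ s : ℕ, ∀ i : Fin (n+1), (i:ℕ) ≤ k + s → u i = 0 := by
      intro s
      induction s with
      | zero => simpa using base
      | succ s ih =>
        intro i hi
        rcases Nat.lt_or_ge (k+s) n with hlt | hge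
        · exact hstep (k+s) (by omega) hlt ih i (by omega)
        · exact ih i (by omega)
    have hall : ∀ i : Fin (n+1), u i = 0 := fun i => H (i:ℕ) i (by omega)
    have : (u ⬝ᵥ u) = 0 := by simp [dotProduct, hall]
    rw [hu1] at this
    norm_num at this
  -- conclusion
  have hYX : ∀ i j, Y i j = X i j + (if i = kS ∧ j = k1F then β j else 0) := by
    intro i j
    by_cases hij : i = kS ∧ j = k1F
    · obtain ⟨rfl, rfl⟩ := hij
      rw [if_pos ⟨rfl, rfl⟩, hX, hY]
      rw [if_pos (show k ≤ ((kS : Fin (n+1)):ℕ) by omega),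
        if_neg (show ¬ k ≤ ((k1F : Fin n):ℕ) by omega)]
      rw [if_neg (show ¬ ((kS : Fin (n+1)):ℕ) = ((k1F : Fin n):ℕ) by omega),
        if_pos (show ((kS : Fin (n+1)):ℕ) = ((k1F : Fin n):ℕ)+1 by omega)]
      ring
    · rw [if_neg hij, add_zero, hX, hY]
      by_cases e1 : (i:ℕ) = (j:ℕ)
      · rw [e1]
      · by_cases e2 : (i:ℕ) = (j:ℕ)+1
        · have h3 : ¬((i:ℕ) = k ∧ (j:ℕ) = k-1) := by
            intro ⟨a1, a2⟩
            exact hij ⟨Fin.ext a1, Fin.ext a2⟩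
          by_cases c : k ≤ (j:ℕ)
          · rw [if_pos (by omega), if_pos c]
          · rw [if_neg (by omega), if_neg c]
        · rw [if_neg e1, if_neg e2]
          simp
  set cc : ℝ := β k1F * u kS with hcc
  have hd : Yᵀ *ᵥ u = fun j => v j + (if j = k1F then cc else 0) := by
    funext j
    have h1 : (Yᵀ *ᵥ u) j = ∑ i, Y i j * u i := by
      rw [mulVec_apply']
      exact Finset.sum_congr rfl (fun i _ => by rw [Matrix.transpose_apply])
    have h2 : v j = ∑ i, X i j * u i := by
      rw [hvdef, mulVec_apply']
      exact Finset.sum_congr rfl (fun i _ => by rw [Matrix.transpose_apply])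
    rw [h1, h2]
    have : ∀ i, Y i j * u i = X i j * u i + (if i = kS ∧ j = k1F then β j * u i else 0) := by
      intro i
      rw [hYX i j]
      by_cases h : i = kS ∧ j = k1F
      · rw [if_pos h, if_pos h]; ring
      · rw [if_neg h, if_neg h]; ring
    rw [Finset.sum_congr rfl (fun i _ => this i), Finset.sum_add_distrib]
    congr 1
    by_cases h : j = k1F
    · subst h
      rw [if_pos rfl]
      have : ∀ i : Fin (n+1), (if i = kS ∧ (k1F : Fin n) = k1F then β k1F * u i else 0)
          = (if i = kS then β k1F * u i else 0) := by
        intro i; by_cases h' : i = kS <;> simp [h']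
      rw [Finset.sum_congr rfl (fun i _ => this i)]
      simp [Finset.sum_ite_eq', hcc]
    · rw [if_neg h]
      apply Finset.sum_eq_zero
      intro i _
      rw [if_neg (by tauto)]
  have hvk1F : v k1F = 0 := by
    rw [hv, if_neg (by simp; omega)]
  have hvv : v ⬝ᵥ v = specNorm X ^ 2 := by
    have h1 : v ⬝ᵥ v = u ⬝ᵥ (X *ᵥ v) := by
      calc v ⬝ᵥ v = (u ᵥ* X) ⬝ᵥ v := by rw [hvdef, Matrix.mulVec_transpose]
        _ = u ⬝ᵥ (X *ᵥ v) := (Matrix.dotProduct_mulVec u X v).symm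
    rw [h1, heq]
    simp [hu1]
  have hdot : (Yᵀ *ᵥ u) ⬝ᵥ (Yᵀ *ᵥ u) = specNorm X ^ 2 + cc ^ 2 := by
    rw [hd]
    have hterm : ∀ j : Fin n, (v j + (if j = k1F then cc else 0)) * (v j + (if j = k1F then cc else 0))
        = v j * v j + (if j = k1F then cc^2 else 0) := by
      intro j
      by_cases h : j = k1F
      · subst h; rw [if_pos rfl, if_pos rfl, hvk1F]; ring
      · rw [if_neg h, if_neg h]; ring
    show (∑ j, _) = _
    rw [Finset.sum_congr rfl (fun j _ => hterm j), Finset.sum_add_distrib]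
    rw [show (∑ j, v j * v j) = v ⬝ᵥ v from rfl, hvv]
    simp [Finset.sum_ite_eq']
  have hccne : cc ≠ 0 := mul_ne_zero (hβ _).ne' hukS
  have hlt : specNorm X < specNorm Yᵀ := by
    apply lt_specNorm Yᵀ hu1 (specNorm_nonneg X)
    rw [hdot]
    have : 0 < cc^2 := by positivity
    linarith
  rwa [specNorm_transpose] at hlt



set_option maxHeartbeats 1000000 in
lemma claim2 (n k : ℕ) (hn : 2 ≤ n) (hk1 : 1 ≤ k) (hk2 : k ≤ n - 1)
    (α β : Fin n → ℝ) (hα : ∀ i, 0 < α i) (hβ : ∀ i, 0 < β i)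
    (Y Z : Matrix (Fin (n+1)) (Fin n) ℝ)
    (hY : ∀ i j, Y i j = if k ≤ (i : ℕ) then
      (if (i:ℕ) = (j:ℕ) then α j else if (i:ℕ) = (j:ℕ)+1 then β j else 0) else 0)
    (hZ : ∀ i j, Z i j = if k - 1 ≤ (j : ℕ) then
      (if (i:ℕ) = (j:ℕ) then α j else if (i:ℕ) = (j:ℕ)+1 then β j else 0) else 0) :
    specNorm Y < specNorm Z := by
  have hkn : k < n := by omega
  set kF : Fin n := ⟨k, hkn⟩ with hkF
  set kS : Fin (n+1) := ⟨k, by omega⟩ with hkS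
  set k1F : Fin n := ⟨k-1, by omega⟩ with hk1F
  set k1S : Fin (n+1) := ⟨k-1, by omega⟩ with hk1S
  have hkSv : (kS:ℕ) = k := rfl
  have hkFv : (kF:ℕ) = k := rfl
  have hk1Fv : (k1F:ℕ) = k-1 := rfl
  have hk1Sv : (k1S:ℕ) = k-1 := rfl
  have hYpos : 0 < specNorm Y := by
    apply specNorm_pos Y kS kF
    have : Y kS kF = α kF := by
      rw [hY, if_pos (le_refl k), if_pos rfl]
    rw [this]; exact (hα _).ne'
  obtain ⟨y, hy1, hy2⟩ := exists_eigvec' (by omega : 0 < n) Yᵀ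
  rw [Matrix.transpose_transpose, specNorm_transpose] at hy2
  set w := Y *ᵥ y with hwdef
  have heq : Yᵀ *ᵥ w = (specNorm Y ^ 2) • y := by
    rw [hwdef, Matrix.mulVec_mulVec]; exact hy2
  have hl2 : (0:ℝ) < specNorm Y ^ 2 := by positivity
  -- row-zero for w
  have hw0 : ∀ i : Fin (n+1), (i:ℕ) < k → w i = 0 := by
    intro i hi
    rw [hwdef, mulVec_apply']
    apply Finset.sum_eq_zero
    intro j _
    rw [hY, if_neg (by omega), zero_mul]
  -- uniform column formula for Yᵀ *ᵥ w
  have hYtw : ∀ j : Fin n, (Yᵀ *ᵥ w) j =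
      (if k ≤ (j:ℕ) then α j else 0) * w ⟨(j:ℕ), Nat.lt_succ_of_lt j.isLt⟩ +
      (if k ≤ (j:ℕ)+1 then β j else 0) * w ⟨(j:ℕ)+1, Nat.succ_lt_succ j.isLt⟩ := by
    intro j
    have h1 : (Yᵀ *ᵥ w) j = ∑ i, Y i j * w i := by
      rw [mulVec_apply']
      exact Finset.sum_congr rfl (fun i _ => by rw [Matrix.transpose_apply])
    rw [h1]
    have hsummand : ∀ i : Fin (n+1), Y i j * w i =
        (if i = ⟨(j:ℕ), Nat.lt_succ_of_lt j.isLt⟩ then (if k ≤ (j:ℕ) then α j else 0) * w i else 0) +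
        (if i = ⟨(j:ℕ)+1, Nat.succ_lt_succ j.isLt⟩ then (if k ≤ (j:ℕ)+1 then β j else 0) * w i else 0) := by
      intro i
      rw [hY]
      split_ifs <;> first
        | ring1
        | (exfalso; simp only [Fin.ext_iff, Fin.val_mk] at *; omega)
    rw [Finset.sum_congr rfl (fun i _ => hsummand i), Finset.sum_add_distrib]
    simp [Finset.sum_ite_eq']
  -- key nonvanishing : y k1F ≠ 0
  have hyk1F : y k1F ≠ 0 := by
    intro h0
    have hlowy : ∀ j : Fin n, (j:ℕ) < k-1 → y j = 0 := by
      intro j hj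
      have e1 := congrFun heq j
      rw [hYtw j, if_neg (by omega), if_neg (by omega), Pi.smul_apply, smul_eq_mul] at e1
      have : (0:ℝ) = specNorm Y ^2 * y j := by linarith [e1]
      rcases mul_eq_zero.mp this.symm with h | h
      · exact absurd h (by positivity)
      · exact h
    have hstep : ∀ t : ℕ, k-1 ≤ t → t < n-1 → (∀ j : Fin n, (j:ℕ) ≤ t → y j = 0) →
        ∀ j : Fin n, (j:ℕ) ≤ t+1 → y j = 0 := by
      intro t hkt htn ih j hj
      rcases Nat.lt_or_ge (j:ℕ) (t+1) with h | h
      · exact ih j (by omega)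
      have hjeq : (j:ℕ) = t+1 := by omega
      have hwz : ∀ i : Fin (n+1), (i:ℕ) ≤ t → w i = 0 := by
        intro i hi
        rcases Nat.lt_or_ge (i:ℕ) k with hik | hik
        · exact hw0 i hik
        · rw [hwdef, mulVec_apply']
          apply Finset.sum_eq_zero
          intro j' _
          by_cases hj' : (j':ℕ) ≤ t
          · rw [ih j' hj', mul_zero]
          · rw [hY, if_pos hik, if_neg (by omega), if_neg (by omega), zero_mul]
      -- equation at ⟨t, _⟩ gives w ⟨t+1⟩ = 0
      have e1 := congrFun heq ⟨t, by omega⟩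
      rw [hYtw ⟨t, by omega⟩, Pi.smul_apply, smul_eq_mul] at e1
      rw [ih ⟨t, by omega⟩ (by simp), mul_zero] at e1
      rw [hwz ⟨t, _⟩ (by simp), mul_zero, zero_add] at e1
      rw [if_pos (show k ≤ t+1 by omega)] at e1
      have hwt1 : w ⟨t+1, by omega⟩ = 0 := by
        rcases mul_eq_zero.mp e1 with h' | h'
        · exact absurd h' (hβ _).ne'
        · exact h'
      -- expand w ⟨t+1⟩
      have hexp : w ⟨t+1, by omega⟩ = α ⟨t+1, by omega⟩ * y ⟨t+1, by omega⟩ := by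
        rw [hwdef, mulVec_apply']
        rw [sum_eq_single_term _ ⟨t+1, by omega⟩ ?_]
        · rw [hY, if_pos (by simp; omega), if_pos (by simp)]
        · intro j' hj'
          rcases Nat.lt_or_ge (j':ℕ) (t+1) with h1 | h1
          · rw [ih j' (by omega), mul_zero]
          · have h2 : t+1 < (j':ℕ) := by
              rcases Nat.eq_or_lt_of_le h1 with h3 | h3
              · exact absurd (Fin.ext h3.symm) hj'
              · exact h3
            rw [hY]
            by_cases c : k ≤ t+1
            · rw [if_pos (by simp; omega), if_neg (by simp; omega), if_neg (by simp; omega), zero_mul]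
            · omega
      rw [hexp] at hwt1
      have : y ⟨t+1, by omega⟩ = 0 := by
        rcases mul_eq_zero.mp hwt1 with h' | h'
        · exact absurd h' (hα _).ne'
        · exact h'
      have hje : j = ⟨t+1, by omega⟩ := Fin.ext hjeq
      rw [hje]; exact this
    have base : ∀ j : Fin n, (j:ℕ) ≤ k-1 → y j = 0 := by
      intro j hj
      rcases Nat.lt_or_ge (j:ℕ) (k-1) with h | h
      · exact hlowy j h
      · have : j = k1F := Fin.ext (by omega)
        rw [this]; exact h0
    have H : ∀ s : ℕ, ∀ j : Fin n, (j:ℕ) ≤ (k-1) + s → y j = 0 := by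
      intro s
      induction s with
      | zero => simpa using base
      | succ s ih =>
        intro j hj
        rcases Nat.lt_or_ge ((k-1)+s) (n-1) with hlt | hge
        · exact hstep ((k-1)+s) (by omega) hlt ih j (by omega)
        · exact ih j (by omega)
    have hall : ∀ j : Fin n, y j = 0 := fun j => H (j:ℕ) j (by omega)
    have : (y ⬝ᵥ y) = 0 := by simp [dotProduct, hall]
    rw [hy1] at this
    norm_num at this
  -- Z = Y + α_{k-1} E_{k-1,k-1}
  have hZY : ∀ i j, Z i j = Y i j + (if i = k1S ∧ j = k1F then α j else 0) := by
    intro i j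
    by_cases hij : i = k1S ∧ j = k1F
    · obtain ⟨rfl, rfl⟩ := hij
      rw [if_pos ⟨rfl, rfl⟩, hZ, hY]
      rw [if_pos (show k-1 ≤ ((k1F : Fin n):ℕ) by omega),
        if_neg (show ¬ k ≤ ((k1S : Fin (n+1)):ℕ) by omega)]
      rw [if_pos (show ((k1S : Fin (n+1)):ℕ) = ((k1F : Fin n):ℕ) from rfl)]
      ring
    · rw [if_neg hij, add_zero, hZ, hY]
      by_cases e1 : (i:ℕ) = (j:ℕ)
      · have h3 : ¬((i:ℕ) = k-1 ∧ (j:ℕ) = k-1) := by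
          intro ⟨a1, a2⟩
          exact hij ⟨Fin.ext a1, Fin.ext a2⟩
        by_cases c : k ≤ (j:ℕ)
        · rw [if_pos (show k-1 ≤ (j:ℕ) by omega), if_pos (show k ≤ (i:ℕ) by omega), if_pos e1]
        · rw [if_neg (show ¬ k-1 ≤ (j:ℕ) by omega), if_neg (show ¬ k ≤ (i:ℕ) by omega)]
      · by_cases e2 : (i:ℕ) = (j:ℕ)+1
        · by_cases c : k-1 ≤ (j:ℕ)
          · rw [if_pos c, if_pos (show k ≤ (i:ℕ) by omega), if_neg e1, if_pos e2]
          · rw [if_neg c, if_neg (show ¬ k ≤ (i:ℕ) by omega)]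
        · rw [if_neg e1, if_neg e2]
          simp
  set cc : ℝ := α k1F * y k1F with hcc
  have hZy : Z *ᵥ y = fun i => w i + (if i = k1S then cc else 0) := by
    funext i
    rw [mulVec_apply', hwdef, mulVec_apply']
    have : ∀ j, Z i j * y j = Y i j * y j + (if i = k1S ∧ j = k1F then α j * y j else 0) := by
      intro j
      rw [hZY i j]
      by_cases h : i = k1S ∧ j = k1F
      · rw [if_pos h, if_pos h]; ring
      · rw [if_neg h, if_neg h]; ring
    rw [Finset.sum_congr rfl (fun j _ => this j), Finset.sum_add_distrib]
    congr 1
    by_cases h : i = k1S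
    · subst h
      rw [if_pos rfl]
      have : ∀ j : Fin n, (if (k1S : Fin (n+1)) = k1S ∧ j = k1F then α j * y j else 0)
          = (if j = k1F then α j * y j else 0) := by
        intro j; by_cases h' : j = k1F <;> simp [h']
      rw [Finset.sum_congr rfl (fun j _ => this j)]
      simp [Finset.sum_ite_eq', hcc]
    · rw [if_neg h]
      apply Finset.sum_eq_zero
      intro j _
      rw [if_neg (by tauto)]
  have hwk1S : w k1S = 0 := hw0 _ (by omega)
  have hww : w ⬝ᵥ w = specNorm Y ^ 2 := by
    calc w ⬝ᵥ w = (y ᵥ* Yᵀ) ⬝ᵥ w := by rw [Matrix.vecMul_transpose, hwdef]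
      _ = y ⬝ᵥ (Yᵀ *ᵥ w) := (Matrix.dotProduct_mulVec _ _ _).symm
      _ = specNorm Y ^ 2 := by rw [heq]; simp [hy1]
  have hdot : (Z *ᵥ y) ⬝ᵥ (Z *ᵥ y) = specNorm Y ^ 2 + cc ^ 2 := by
    rw [hZy]
    have hterm : ∀ i : Fin (n+1), (w i + (if i = k1S then cc else 0)) * (w i + (if i = k1S then cc else 0))
        = w i * w i + (if i = k1S then cc^2 else 0) := by
      intro i
      by_cases h : i = k1S
      · subst h; rw [if_pos rfl, if_pos rfl, hwk1S]; ring
      · rw [if_neg h, if_neg h]; ring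
    show (∑ i, _) = _
    rw [Finset.sum_congr rfl (fun i _ => hterm i), Finset.sum_add_distrib]
    rw [show (∑ i, w i * w i) = w ⬝ᵥ w from rfl, hww]
    simp [Finset.sum_ite_eq']
  have hccne : cc ≠ 0 := mul_ne_zero (hα _).ne' hyk1F
  apply lt_specNorm Z hy1 (specNorm_nonneg Y)
  rw [hdot]
  have : 0 < cc^2 := by positivity
  linarith



lemma colSub_mul_transpose {a b : ℕ} (M : Matrix (Fin a) (Fin b) ℝ) (k : ℕ) (hk : k ≤ b) :
    colSub M k hk * (colSub M k hk)ᵀ =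
      M * Matrix.diagonal (fun j : Fin b => if (j:ℕ) < k then (1:ℝ) else 0) * Mᵀ := by
  ext i l
  have hR : (M * Matrix.diagonal (fun j : Fin b => if (j:ℕ) < k then (1:ℝ) else 0) * Mᵀ) i l
      = ∑ j : Fin b, if (j:ℕ) < k then M i j * M l j else 0 := by
    rw [Matrix.mul_apply]
    apply Finset.sum_congr rfl
    intro j _
    rw [Matrix.mul_diagonal, Matrix.transpose_apply]
    by_cases h : (j:ℕ) < k
    · rw [if_pos h, if_pos h]; ring
    · rw [if_neg h, if_neg h]; ring
  rw [hR, ← Finset.sum_filter]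
  have hset : Finset.univ.filter (fun j : Fin b => (j:ℕ) < k) =
      Finset.univ.map (Fin.castLEEmb hk) := by
    ext j
    simp only [Finset.mem_filter, Finset.mem_univ, true_and, Finset.mem_map]
    constructor
    · intro h
      exact ⟨⟨(j:ℕ), h⟩, Fin.ext rfl⟩
    · rintro ⟨x, -, rfl⟩
      simpa using x.isLt
  rw [hset, Finset.sum_map, Matrix.mul_apply]
  apply Finset.sum_congr rfl
  intro j _
  rfl

lemma right_reduction {m n : ℕ} (P : Matrix (Fin m) (Fin (n+1)) ℝ)
    (B : Matrix (Fin (n+1)) (Fin n) ℝ) {Q : Matrix (Fin n) (Fin n) ℝ} (hQ : Qᵀ * Q = 1)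
    (D : Matrix (Fin n) (Fin n) ℝ) :
    (P * B * Qᵀ) * (1 - Q * D * Qᵀ) = P * (B * (1 - D)) * Qᵀ := by
  have h1 : (P * B * Qᵀ) * (Q * D * Qᵀ) = P * (B * D) * Qᵀ := by
    simp only [Matrix.mul_assoc]
    rw [← Matrix.mul_assoc Qᵀ Q, hQ, Matrix.one_mul]
  rw [Matrix.mul_sub, Matrix.mul_one, h1, Matrix.mul_sub B, Matrix.mul_one,
    Matrix.mul_sub P, Matrix.sub_mul]

lemma left_reduction {m n : ℕ} {P : Matrix (Fin m) (Fin (n+1)) ℝ} (hP : Pᵀ * P = 1)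
    (B : Matrix (Fin (n+1)) (Fin n) ℝ) (Q : Matrix (Fin n) (Fin n) ℝ)
    (D : Matrix (Fin (n+1)) (Fin (n+1)) ℝ) :
    (1 - P * D * Pᵀ) * (P * B * Qᵀ) = P * ((1 - D) * B) * Qᵀ := by
  have h1 : (P * D * Pᵀ) * (P * B * Qᵀ) = P * (D * B) * Qᵀ := by
    simp only [Matrix.mul_assoc]
    rw [← Matrix.mul_assoc Pᵀ P, hP, Matrix.one_mul]
  rw [Matrix.sub_mul, Matrix.one_mul, h1,
    Matrix.sub_mul (1 : Matrix (Fin (n+1)) (Fin (n+1)) ℝ) D B, Matrix.one_mul,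
    Matrix.mul_sub P, Matrix.sub_mul]

lemma one_sub_diagonal {b : ℕ} (d : Fin b → ℝ) :
    (1 : Matrix (Fin b) (Fin b) ℝ) - Matrix.diagonal d = Matrix.diagonal (fun j => 1 - d j) := by
  rw [← Matrix.diagonal_one, ← Matrix.diagonal_sub]


end SpecAux

open SpecAux in
/-- `γ_k^{lsqr} < γ_k^{cgme} < γ_{k-1}^{lsqr}` for `1 ≤ k ≤ n-1`. -/
theorem cgme_rank_k_error_between_lsqr_errors
    (m n : ℕ) (hn : 2 ≤ n) (hmn : n < m)
    (A : Matrix (Fin m) (Fin n) ℝ)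
    (P : Matrix (Fin m) (Fin (n + 1)) ℝ) (hP : Pᵀ * P = 1)
    (Q : Matrix (Fin n) (Fin n) ℝ) (hQ : Qᵀ * Q = 1)
    (α : Fin n → ℝ) (hα : ∀ i, 0 < α i)
    (β : Fin n → ℝ) (hβ : ∀ i, 0 < β i)
    (B : Matrix (Fin (n + 1)) (Fin n) ℝ)
    (hB : ∀ (i : Fin (n + 1)) (j : Fin n),
      B i j = if (i : ℕ) = (j : ℕ) then α j
        else if (i : ℕ) = (j : ℕ) + 1 then β j else 0)
    (hA : A = P * B * Qᵀ)
    (σ : Fin n → ℝ) (hσpos : ∀ i, 0 < σ i)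
    (hσstrict : ∀ i j : Fin n, i < j → σ j < σ i)
    (hσ : ∀ i : Fin n, σ i = singVal A ((i : ℕ) + 1))
    (k : ℕ) (hk1 : 1 ≤ k) (hk2 : k ≤ n - 1) :
    specNorm (A * (1 - colSub Q k (by omega) * (colSub Q k (by omega))ᵀ)) <
      specNorm ((1 - colSub P k (by omega) * (colSub P k (by omega))ᵀ) * A) ∧
    specNorm ((1 - colSub P k (by omega) * (colSub P k (by omega))ᵀ) * A) <
      specNorm (A * (1 - colSub Q (k - 1) (by omega) * (colSub Q (k - 1) (by omega))ᵀ)) := by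
  have hDn : ∀ k' : ℕ, ∀ (i : Fin (n+1)) (j : Fin n),
      ((B * (1 - Matrix.diagonal (fun j : Fin n => if (j:ℕ) < k' then (1:ℝ) else 0)) :
        Matrix (Fin (n+1)) (Fin n) ℝ)) i j =
      if k' ≤ (j:ℕ) then (if (i:ℕ) = (j:ℕ) then α j else if (i:ℕ) = (j:ℕ)+1 then β j else 0)
      else 0 := by
    intro k' i j
    rw [one_sub_diagonal, Matrix.mul_diagonal, hB]
    by_cases h : (j:ℕ) < k'
    · rw [if_pos h, if_neg (show ¬ k' ≤ (j:ℕ) by omega)]; ring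
    · rw [if_neg h, if_pos (show k' ≤ (j:ℕ) by omega)]; ring
  have hDm : ∀ k' : ℕ, ∀ (i : Fin (n+1)) (j : Fin n),
      (((1 - Matrix.diagonal (fun i : Fin (n+1) => if (i:ℕ) < k' then (1:ℝ) else 0)) * B :
        Matrix (Fin (n+1)) (Fin n) ℝ)) i j =
      if k' ≤ (i:ℕ) then (if (i:ℕ) = (j:ℕ) then α j else if (i:ℕ) = (j:ℕ)+1 then β j else 0)
      else 0 := by
    intro k' i j
    rw [one_sub_diagonal, Matrix.diagonal_mul, hB]
    by_cases h : (i:ℕ) < k'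
    · rw [if_pos h, if_neg (show ¬ k' ≤ (i:ℕ) by omega)]; ring
    · rw [if_neg h, if_pos (show k' ≤ (i:ℕ) by omega)]; ring
  have e1 : A * (1 - colSub Q k (by omega) * (colSub Q k (by omega))ᵀ) =
      P * (B * (1 - Matrix.diagonal (fun j : Fin n => if (j:ℕ) < k then (1:ℝ) else 0))) * Qᵀ := by
    rw [colSub_mul_transpose, hA, right_reduction P B hQ]
  have e2 : (1 - colSub P k (by omega) * (colSub P k (by omega))ᵀ) * A =
      P * ((1 - Matrix.diagonal (fun i : Fin (n+1) => if (i:ℕ) < k then (1:ℝ) else 0)) * B) * Qᵀ := by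
    rw [colSub_mul_transpose, hA, left_reduction hP B Q]
  have e3 : A * (1 - colSub Q (k-1) (by omega) * (colSub Q (k-1) (by omega))ᵀ) =
      P * (B * (1 - Matrix.diagonal (fun j : Fin n => if (j:ℕ) < k-1 then (1:ℝ) else 0))) * Qᵀ := by
    rw [colSub_mul_transpose, hA, right_reduction P B hQ]
  constructor
  · rw [e1, e2, specNorm_orth_right hQ, specNorm_orth_right hQ,
      specNorm_orth_left hP, specNorm_orth_left hP]
    exact claim1 n k hn hk1 hk2 α β hα hβ _ _ (hDn k) (hDm k)
  · rw [e2, e3, specNorm_orth_right hQ, specNorm_orth_right hQ,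
      specNorm_orth_left hP, specNorm_orth_left hP]
    exact claim2 n k hn hk1 hk2 α β hα hβ _ _ (hDm k) (hDn (k-1))
end

section
/- Let k ≥ 1, let B_k ∈ ℝ^{(k+1)×k} be lower bidiagonal with (B_k)_{ii} = α_i > 0 (1 ≤ i ≤ k), (B_k)_{i+1,i} = β_{i+1} > 0 (1 ≤ i ≤ k), and all other entries zero, let α_{k+1} > 0, and let B̄_{k+1} := (B_k, α_{k+1} e_{k+1}) ∈ ℝ^{(k+1)×(k+1)} be the matrix obtained by appending to B_k the column α_{k+1} e_{k+1}, where e_{k+1} is the last standard basis vector of ℝ^{k+1}. Then the singular values θ̄_1^{(k+1)} > ⋯ > θ̄_{k+1}^{(k+1)} of B̄_{k+1} and the singular values θ_1^{(k)} > ⋯ > θ_k^{(k)} of B_k strictly interlace: θ̄_1^{(k+1)} > θ_1^{(k)} > θ̄_2^{(k+1)} > θ_2^{(k)} > ⋯ > θ̄_k^{(k+1)} > θ_k^{(k)} > θ̄_{k+1}^{(k+1)}. -/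
open Matrix

lemma specNorm_nonneg {a b : ℕ} (M : Matrix (Fin a) (Fin b) ℝ) : 0 ≤ specNorm M :=
  norm_nonneg _

lemma norm_equiv_symm_sq {n : ℕ} (v : Fin n → ℝ) :
    ‖(WithLp.equiv 2 (Fin n → ℝ)).symm v‖ ^ 2 = v ⬝ᵥ v := by
  rw [EuclideanSpace.norm_eq]
  rw [Real.sq_sqrt (by positivity)]
  simp [dotProduct, sq]

lemma dotProduct_self_nonneg {n : ℕ} (v : Fin n → ℝ) : 0 ≤ v ⬝ᵥ v := by
  apply Finset.sum_nonneg; intro i _; exact mul_self_nonneg _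

lemma mulVec_dot_le_specNorm {a b : ℕ} (M : Matrix (Fin a) (Fin b) ℝ) (x : Fin b → ℝ) :
    (M *ᵥ x) ⬝ᵥ (M *ᵥ x) ≤ specNorm M ^ 2 * (x ⬝ᵥ x) := by
  have h := (LinearMap.toContinuousLinearMap (Matrix.toEuclideanLin M)).le_opNorm
    ((WithLp.equiv 2 (Fin b → ℝ)).symm x)
  have happ : (LinearMap.toContinuousLinearMap (Matrix.toEuclideanLin M))
      ((WithLp.equiv 2 (Fin b → ℝ)).symm x) = (WithLp.equiv 2 (Fin a → ℝ)).symm (M *ᵥ x) := by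
    simp [LinearMap.coe_toContinuousLinearMap']
  rw [happ] at h
  have h2 : ‖(WithLp.equiv 2 (Fin a → ℝ)).symm (M *ᵥ x)‖ ^ 2 ≤
      (specNorm M * ‖(WithLp.equiv 2 (Fin b → ℝ)).symm x‖) ^ 2 := by
    apply pow_le_pow_left₀ (norm_nonneg _) h
  rw [norm_equiv_symm_sq] at h2
  calc (M *ᵥ x) ⬝ᵥ (M *ᵥ x) ≤ (specNorm M * ‖(WithLp.equiv 2 (Fin b → ℝ)).symm x‖) ^ 2 := h2
    _ = specNorm M ^ 2 * (x ⬝ᵥ x) := by rw [mul_pow, norm_equiv_symm_sq]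

lemma specNorm_le_of {a b : ℕ} (M : Matrix (Fin a) (Fin b) ℝ) (C : ℝ) (hC : 0 ≤ C)
    (h : ∀ x : Fin b → ℝ, (M *ᵥ x) ⬝ᵥ (M *ᵥ x) ≤ C ^ 2 * (x ⬝ᵥ x)) : specNorm M ≤ C := by
  apply ContinuousLinearMap.opNorm_le_bound _ hC
  intro y
  set x : Fin b → ℝ := WithLp.equiv 2 (Fin b → ℝ) y with hx
  have hy : y = (WithLp.equiv 2 (Fin b → ℝ)).symm x := rfl
  have happ : (LinearMap.toContinuousLinearMap (Matrix.toEuclideanLin M)) y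
      = (WithLp.equiv 2 (Fin a → ℝ)).symm (M *ᵥ x) := by
    rw [hy]; simp [LinearMap.coe_toContinuousLinearMap']
  rw [happ, hy]
  have h1 : ‖(WithLp.equiv 2 (Fin a → ℝ)).symm (M *ᵥ x)‖ ^ 2 ≤
      (C * ‖(WithLp.equiv 2 (Fin b → ℝ)).symm x‖) ^ 2 := by
    rw [norm_equiv_symm_sq, mul_pow, norm_equiv_symm_sq]; exact h x
  have h2 := Real.sqrt_le_sqrt h1
  rwa [Real.sqrt_sq (norm_nonneg _), Real.sqrt_sq (by positivity)] at h2

/-- extension of a vector by zeros -/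
def ext0 {k b : ℕ} (hk : k ≤ b) (x : Fin k → ℝ) : Fin b → ℝ :=
  fun j => if h : j.1 < k then x ⟨j.1, h⟩ else 0

lemma sum_ext {k b : ℕ} (hk : k ≤ b) (f : Fin b → ℝ) (hf : ∀ j : Fin b, k ≤ j.1 → f j = 0) :
    ∑ j, f j = ∑ j : Fin k, f ⟨j.1, lt_of_lt_of_le j.2 hk⟩ := by
  set F : ℕ → ℝ := fun n => if h : n < b then f ⟨n, h⟩ else 0 with hF
  have h1 : ∑ j, f j = ∑ n ∈ Finset.range b, F n := by
    rw [← Fin.sum_univ_eq_sum_range F b]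
    exact Finset.sum_congr rfl (fun j _ => by simp [hF, j.2])
  have h2 : ∑ j : Fin k, f ⟨j.1, lt_of_lt_of_le j.2 hk⟩ = ∑ n ∈ Finset.range k, F n := by
    rw [← Fin.sum_univ_eq_sum_range F k]
    exact Finset.sum_congr rfl (fun j _ => by simp [hF, lt_of_lt_of_le j.2 hk])
  rw [h1, h2]
  symm
  apply Finset.sum_subset (Finset.range_subset_range.2 hk)
  intro n hn hn'
  simp only [Finset.mem_range] at hn hn'
  simp [hF, hn, hf ⟨n, hn⟩ (Nat.not_lt.1 hn')]

lemma ext0_dot {k b : ℕ} (hk : k ≤ b) (x : Fin k → ℝ) :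
    (ext0 hk x) ⬝ᵥ (ext0 hk x) = x ⬝ᵥ x := by
  unfold dotProduct
  rw [sum_ext hk _ (fun j hj => by simp [ext0, Nat.not_lt.2 hj])]
  apply Finset.sum_congr rfl
  intro j _; simp [ext0, j.2]

lemma mulVec_ext0 {a k b : ℕ} (hk : k ≤ b) (G : Matrix (Fin a) (Fin b) ℝ) (x : Fin k → ℝ) :
    G *ᵥ (ext0 hk x) = (colSub G k hk) *ᵥ x := by
  funext i
  show ∑ j, G i j * ext0 hk x j = ∑ j : Fin k, _
  rw [sum_ext hk _ (fun j hj => by simp [ext0, Nat.not_lt.2 hj])]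
  apply Finset.sum_congr rfl
  intro j _; simp [ext0, j.2, colSub, Matrix.submatrix]

lemma rank_colSub_le {a b : ℕ} (G : Matrix (Fin a) (Fin b) ℝ) (k : ℕ) (hk : k ≤ b) :
    (colSub G k hk).rank ≤ G.rank := by
  rw [Matrix.rank_eq_finrank_span_cols, Matrix.rank_eq_finrank_span_cols]
  apply Submodule.finrank_mono
  apply Submodule.span_mono
  rintro _ ⟨j, rfl⟩
  exact ⟨⟨j.1, lt_of_lt_of_le j.2 hk⟩, rfl⟩

lemma singVal_nonneg {a b : ℕ} (M : Matrix (Fin a) (Fin b) ℝ) (j : ℕ) : 0 ≤ singVal M j :=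
  Real.sInf_nonneg (fun r ⟨D, _, hr⟩ => hr ▸ specNorm_nonneg _)

lemma singVal_bddBelow {a b : ℕ} (M : Matrix (Fin a) (Fin b) ℝ) (j : ℕ) :
    BddBelow {r : ℝ | ∃ D : Matrix (Fin a) (Fin b) ℝ, D.rank < j ∧ r = specNorm (M - D)} :=
  ⟨0, fun r ⟨D, _, hr⟩ => hr ▸ specNorm_nonneg _⟩

lemma singVal_nonempty {a b : ℕ} (M : Matrix (Fin a) (Fin b) ℝ) (j : ℕ) (hj : 1 ≤ j) :
    Set.Nonempty {r : ℝ | ∃ D : Matrix (Fin a) (Fin b) ℝ, D.rank < j ∧ r = specNorm (M - D)} :=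
  ⟨specNorm (M - 0), 0, by rw [Matrix.rank_zero]; omega, rfl⟩

lemma specNorm_mono {a c c' : ℕ} (N : Matrix (Fin a) (Fin c) ℝ) (N' : Matrix (Fin a) (Fin c') ℝ)
    (h : ∀ x : Fin c → ℝ, ∃ x' : Fin c' → ℝ,
      N *ᵥ x = N' *ᵥ x' ∧ x' ⬝ᵥ x' ≤ x ⬝ᵥ x) : specNorm N ≤ specNorm N' := by
  apply specNorm_le_of _ _ (specNorm_nonneg _)
  intro x
  obtain ⟨x', he, hd⟩ := h x
  rw [he]
  calc (N' *ᵥ x') ⬝ᵥ (N' *ᵥ x') ≤ specNorm N' ^ 2 * (x' ⬝ᵥ x') := mulVec_dot_le_specNorm _ _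
    _ ≤ specNorm N' ^ 2 * (x ⬝ᵥ x) := by
        apply mul_le_mul_of_nonneg_left hd (by positivity)

lemma specNorm_colSub_le {a b : ℕ} (G : Matrix (Fin a) (Fin b) ℝ) (k : ℕ) (hk : k ≤ b) :
    specNorm (colSub G k hk) ≤ specNorm G := by
  apply specNorm_mono
  intro x
  exact ⟨ext0 hk x, (mulVec_ext0 hk G x).symm, (ext0_dot hk x).le⟩

lemma singVal_colSub_le {a b : ℕ} (G : Matrix (Fin a) (Fin b) ℝ) (k : ℕ) (hk : k ≤ b)
    (j : ℕ) (hj : 1 ≤ j) : singVal (colSub G k hk) j ≤ singVal G j := by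
  apply le_csInf (singVal_nonempty G j hj)
  rintro r ⟨D, hD, rfl⟩
  have h1 : singVal (colSub G k hk) j ≤ specNorm (colSub G k hk - colSub D k hk) :=
    csInf_le (singVal_bddBelow _ _) ⟨colSub D k hk, lt_of_le_of_lt (rank_colSub_le D k hk) hD, rfl⟩
  have h2 : colSub G k hk - colSub D k hk = colSub (G - D) k hk := rfl
  rw [h2] at h1
  exact h1.trans (specNorm_colSub_le (G - D) k hk)

lemma singVal_succ_le_colSub {a k : ℕ} (G : Matrix (Fin a) (Fin (k+1)) ℝ)
    (i : ℕ) (hi : 1 ≤ i) :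
    singVal G (i + 1) ≤ singVal (colSub G k (Nat.le_succ k)) i := by
  apply le_csInf (singVal_nonempty _ i hi)
  rintro r ⟨D, hD, rfl⟩
  set c : Fin a → ℝ := fun i' => G i' ⟨k, Nat.lt_succ_self k⟩ with hc
  set D' : Matrix (Fin a) (Fin (k+1)) ℝ :=
    fun i' j => if h : j.1 < k then D i' ⟨j.1, h⟩ else G i' j with hD'
  have hrank : D'.rank < i + 1 := by
    have h1 : D'.rank ≤ D.rank + 1 := by
      have e1 := Matrix.rank_eq_finrank_span_cols D'
      have e2 := Matrix.rank_eq_finrank_span_cols D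
      rw [e1, e2]
      change Module.finrank ℝ (Submodule.span ℝ (Set.range D'ᵀ)) ≤
        Module.finrank ℝ (Submodule.span ℝ (Set.range Dᵀ)) + 1
      have hsub : Set.range D'ᵀ ⊆ Set.range Dᵀ ∪ {c} := by
        rintro _ ⟨j, rfl⟩
        by_cases h : j.1 < k
        · left; exact ⟨⟨j.1, h⟩, funext fun i' => by simp [hD', Matrix.transpose, h]⟩
        · right
          have hjk : j.1 = k := by omega
          refine Set.mem_singleton_iff.2 (funext fun i' => ?_)
          show (if h : j.1 < k then D i' ⟨j.1, h⟩ else G i' j) = G i' ⟨k, Nat.lt_succ_self k⟩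
          rw [dif_neg h]
          congr 1
          exact Fin.ext hjk
      have step1 : Module.finrank ℝ (Submodule.span ℝ (Set.range D'ᵀ)) ≤
          Module.finrank ℝ (Submodule.span ℝ (Set.range Dᵀ ∪ {c})) :=
        Submodule.finrank_mono (Submodule.span_mono hsub)
      have hu : Submodule.span ℝ (Set.range Dᵀ ∪ {c}) =
          Submodule.span ℝ (Set.range Dᵀ) ⊔ Submodule.span ℝ ({c} : Set (Fin a → ℝ)) :=
        Submodule.span_union _ _
      have step2 : Module.finrank ℝ (Submodule.span ℝ (Set.range Dᵀ ∪ {c})) ≤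
          Module.finrank ℝ (Submodule.span ℝ (Set.range Dᵀ))
            + Module.finrank ℝ (Submodule.span ℝ ({c} : Set (Fin a → ℝ))) := by
        rw [hu]
        exact Submodule.finrank_add_le_finrank_add_finrank _ _
      have step3 : Module.finrank ℝ (Submodule.span ℝ ({c} : Set (Fin a → ℝ))) ≤ 1 :=
        (finrank_span_le_card ({c} : Set (Fin a → ℝ))).trans (by simp)
      omega
    omega
  have hnorm : specNorm (G - D') ≤ specNorm (colSub G k (Nat.le_succ k) - D) := by
    apply specNorm_mono
    intro x
    refine ⟨fun j => x ⟨j.1, lt_of_lt_of_le j.2 (Nat.le_succ k)⟩, ?_, ?_⟩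
    · funext i'
      show ∑ j, (G - D') i' j * x j = _
      rw [sum_ext (Nat.le_succ k) _ (fun j hj => ?_)]
      · apply Finset.sum_congr rfl
        intro j _
        rw [Matrix.sub_apply]
        simp [hD', colSub, Matrix.submatrix, j.2, Matrix.sub_apply]
      · have hjk : j.1 = k := by omega
        have : D' i' j = G i' j := by simp [hD', hjk]
        simp [Matrix.sub_apply, this]
    · set x' : Fin k → ℝ := fun j => x ⟨j.1, lt_of_lt_of_le j.2 (Nat.le_succ k)⟩ with hx'
      calc x' ⬝ᵥ x' = (ext0 (Nat.le_succ k) x') ⬝ᵥ (ext0 (Nat.le_succ k) x') :=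
            (ext0_dot (Nat.le_succ k) x').symm
        _ ≤ x ⬝ᵥ x := by
            apply Finset.sum_le_sum
            intro j _
            by_cases h : j.1 < k
            · simp only [ext0, h, dif_pos, hx']
              exact le_of_eq (by congr 1 <;> exact congrArg x (Fin.ext rfl))
            · simp only [ext0, h, dif_neg, not_false_iff, mul_zero]
              exact mul_self_nonneg _
  exact (csInf_le (singVal_bddBelow _ _) ⟨D', hrank, rfl⟩).trans hnorm

lemma euclid_inner_eq_dot {n : ℕ} (x y : EuclideanSpace ℝ (Fin n)) :
    (inner ℝ x y : ℝ) = (fun i => x i) ⬝ᵥ (fun i => y i) := by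
  simp [PiLp.inner_apply, RCLike.inner_apply, dotProduct, mul_comm]

lemma exists_eigsystem {a b : ℕ} (M : Matrix (Fin a) (Fin b) ℝ) :
    ∃ (ν : Fin b → ℝ) (u : Fin b → (Fin b → ℝ)),
      Antitone ν ∧ (∀ i, (Mᵀ * M) *ᵥ u i = ν i • u i) ∧
      (∀ i l, u i ⬝ᵥ u l = if i = l then 1 else 0) := by
  have hA : (Mᵀ * M).IsHermitian := by
    have := Matrix.isHermitian_conjTranspose_mul_self M
    rwa [Matrix.conjTranspose_eq_transpose_of_trivial] at this
  set g := hA.eigenvalues with hg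
  set e : Fin b → Fin b := fun i => Tuple.sort g i.rev with he
  have hinj : Function.Injective e := fun i l h => by
    have := (Tuple.sort g).injective h
    exact Fin.rev_injective this
  refine ⟨fun i => g (e i), fun i => ⇑(hA.eigenvectorBasis (e i)), ?_, ?_, ?_⟩
  · intro i l hil
    exact Tuple.monotone_sort g (Fin.rev_le_rev.2 hil)
  · intro i
    exact hA.mulVec_eigenvectorBasis (e i)
  · intro i l
    have h := orthonormal_iff_ite.mp hA.eigenvectorBasis.orthonormal (e i) (e l)
    rw [euclid_inner_eq_dot] at h
    rw [show (if e i = e l then (1:ℝ) else 0) = (if i = l then (1:ℝ) else 0) by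
      by_cases hil : i = l
      · simp [hil]
      · rw [if_neg hil, if_neg (fun hc => hil (hinj hc))]] at h
    exact h

lemma sum_repr_of_orthonormal {b : ℕ} (u : Fin b → (Fin b → ℝ))
    (horth : ∀ i l, u i ⬝ᵥ u l = if i = l then 1 else 0) (x : Fin b → ℝ) :
    x = ∑ i, (u i ⬝ᵥ x) • u i := by
  classical
  set U : Matrix (Fin b) (Fin b) ℝ := fun i p => u i p with hU
  have h1 : U * Uᵀ = 1 := by
    ext i l
    simpa [Matrix.mul_apply, Matrix.one_apply, dotProduct] using horth i l
  have h2 : Uᵀ * U = 1 := mul_eq_one_comm.mp h1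
  have h3 : Uᵀ *ᵥ (U *ᵥ x) = x := by
    rw [Matrix.mulVec_mulVec, h2, Matrix.one_mulVec]
  conv_lhs => rw [← h3]
  funext p
  show ∑ q, Uᵀ p q * (U *ᵥ x) q = _
  simp only [Matrix.transpose_apply, Matrix.mulVec, hU]
  rw [Finset.sum_apply]
  apply Finset.sum_congr rfl
  intro q _
  simp [dotProduct, mul_comm]
  exact Or.inl rfl

lemma dot_A {a b : ℕ} (M : Matrix (Fin a) (Fin b) ℝ) (x y : Fin b → ℝ) :
    x ⬝ᵥ ((Mᵀ * M) *ᵥ y) = (M *ᵥ x) ⬝ᵥ (M *ᵥ y) := by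
  rw [← Matrix.mulVec_mulVec, Matrix.dotProduct_mulVec, Matrix.vecMul_transpose]

lemma dot_right {b : ℕ} (u : Fin b → (Fin b → ℝ))
    (horth : ∀ i l, u i ⬝ᵥ u l = if i = l then 1 else 0) (c : Fin b → ℝ) (l : Fin b) :
    u l ⬝ᵥ (∑ i, c i • u i) = c l := by
  classical
  unfold dotProduct
  have : ∀ p, u l p * (∑ i, c i • u i) p = ∑ i, c i * (u l p * u i p) := by
    intro p
    rw [Finset.sum_apply, Finset.mul_sum]
    exact Finset.sum_congr rfl fun i _ => by simp [Pi.smul_apply]; ring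
  simp_rw [this]
  rw [Finset.sum_comm]
  have : ∀ i, ∑ p, c i * (u l p * u i p) = c i * (u l ⬝ᵥ u i) := by
    intro i; rw [dotProduct, Finset.mul_sum]
  simp_rw [this, horth]
  simp

lemma dot_sum_smul {b : ℕ} (u : Fin b → (Fin b → ℝ))
    (horth : ∀ i l, u i ⬝ᵥ u l = if i = l then 1 else 0) (c d : Fin b → ℝ) :
    (∑ i, c i • u i) ⬝ᵥ (∑ l, d l • u l) = ∑ i, c i * d i := by
  classical
  have e1 : ∀ p, (∑ i, c i • u i) p * (∑ l, d l • u l) p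
      = ∑ i, c i * (u i p * (∑ l, d l • u l) p) := by
    intro p
    rw [Finset.sum_apply, Finset.sum_mul]
    exact Finset.sum_congr rfl fun i _ => by simp only [Pi.smul_apply, smul_eq_mul]; ring
  rw [dotProduct]
  simp_rw [e1]
  rw [Finset.sum_comm]
  have e2 : ∀ i, ∑ p, c i * (u i p * (∑ l, d l • u l) p)
      = c i * (u i ⬝ᵥ (∑ l, d l • u l)) := by
    intro i
    rw [dotProduct, Finset.mul_sum]
  simp_rw [e2, dot_right u horth d]

lemma mulVec_sum_smul {b n : ℕ} (A : Matrix (Fin n) (Fin b) ℝ) (c : Fin b → ℝ)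
    (u : Fin b → (Fin b → ℝ)) :
    A *ᵥ (∑ i, c i • u i) = ∑ i, c i • (A *ᵥ u i) := by
  show A.mulVecLin _ = _
  rw [map_sum]
  exact Finset.sum_congr rfl fun i _ => by rw [LinearMap.map_smul]; rfl

lemma quad_eval {a b : ℕ} (M : Matrix (Fin a) (Fin b) ℝ) (ν : Fin b → ℝ)
    (u : Fin b → (Fin b → ℝ))
    (heig : ∀ i, (Mᵀ * M) *ᵥ u i = ν i • u i)
    (horth : ∀ i l, u i ⬝ᵥ u l = if i = l then 1 else 0) (c : Fin b → ℝ) :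
    (M *ᵥ (∑ i, c i • u i)) ⬝ᵥ (M *ᵥ (∑ i, c i • u i)) = ∑ i, ν i * c i ^ 2 ∧
    (∑ i, c i • u i) ⬝ᵥ (∑ i, c i • u i) = ∑ i, c i ^ 2 := by
  constructor
  · rw [← dot_A]
    rw [mulVec_sum_smul]
    have : ∀ i, c i • ((Mᵀ * M) *ᵥ u i) = (ν i * c i) • u i := by
      intro i; rw [heig i, smul_smul, mul_comm]
    simp_rw [this]
    rw [dot_sum_smul u horth c (fun i => ν i * c i)]
    exact Finset.sum_congr rfl fun i _ => by ring
  · rw [dot_sum_smul u horth c c]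
    exact Finset.sum_congr rfl fun i _ => by ring

lemma dotProduct_self_pos {n : ℕ} (x : Fin n → ℝ) (hx : x ≠ 0) : 0 < x ⬝ᵥ x := by
  rcases lt_or_eq_of_le (by apply Finset.sum_nonneg; intro i _; exact mul_self_nonneg _ :
    (0:ℝ) ≤ x ⬝ᵥ x) with h | h
  · exact h
  · exfalso
    apply hx
    funext p
    have := (Finset.sum_eq_zero_iff_of_nonneg (fun i _ => mul_self_nonneg (x i))).mp h.symm
      p (Finset.mem_univ p)
    exact mul_self_eq_zero.mp this

lemma cardlt {b t : ℕ} (ht : t ≤ b) : Fintype.card {i : Fin b // i.1 < t} = t := by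
  have e : {i : Fin b // i.1 < t} ≃ Fin t :=
    ⟨fun i => ⟨i.1.1, i.2⟩, fun l => ⟨⟨l.1, lt_of_lt_of_le l.2 ht⟩, l.2⟩,
      fun i => by ext; rfl, fun l => by ext; rfl⟩
  rw [Fintype.card_congr e, Fintype.card_fin]


lemma tri_eigvec_zero {n : ℕ} (T : Matrix (Fin n) (Fin n) ℝ)
    (htri : ∀ p q : Fin n, (q : ℕ) + 2 ≤ (p : ℕ) → T p q = 0)
    (hsub : ∀ (p : ℕ) (h : p + 1 < n), T ⟨p+1, h⟩ ⟨p, Nat.lt_of_succ_lt h⟩ ≠ 0)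
    (lam : ℝ) (w : Fin n → ℝ) (heig : T *ᵥ w = lam • w)
    (hn : 0 < n) (hlast : w ⟨n-1, by omega⟩ = 0) : w = 0 := by
  have claim : ∀ t : ℕ, ∀ (p : ℕ) (hp : p < n), n ≤ p + 1 + t → w ⟨p, hp⟩ = 0 := by
    intro t
    induction t with
    | zero =>
      intro p hp hpn
      have he : (⟨p, hp⟩ : Fin n) = ⟨n-1, by omega⟩ := by
        apply Fin.ext; show p = n - 1; omega
      rw [he]; exact hlast
    | succ t ih =>
      intro p hp hpn
      by_cases hc : n ≤ p + 1 + t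
      · exact ih p hp hc
      · have hp1 : p + 1 < n := by omega
        have hrow := congrFun heig ⟨p+1, hp1⟩
        have hw1 : w ⟨p+1, hp1⟩ = 0 := ih (p+1) hp1 (by omega)
        have hsum : (T *ᵥ w) ⟨p+1, hp1⟩
            = T ⟨p+1, hp1⟩ ⟨p, Nat.lt_of_succ_lt hp1⟩ * w ⟨p, Nat.lt_of_succ_lt hp1⟩ := by
          show ∑ q, T ⟨p+1, hp1⟩ q * w q = _
          apply Finset.sum_eq_single
          · intro q _ hq
            by_cases hql : (q : ℕ) < p
            · rw [htri _ _ (by simp; omega), zero_mul]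
            · have hqge : p + 1 ≤ (q : ℕ) := by
                rcases Nat.lt_or_ge (q : ℕ) (p+1) with h | h
                · refine absurd (?_ : q = ⟨p, Nat.lt_of_succ_lt hp1⟩) hq
                  apply Fin.ext; show q.1 = p; omega
                · exact h
              have hwq : w q = 0 := by
                have h := ih q.1 q.2 (by omega)
                rwa [Fin.eta] at h
              rw [hwq, mul_zero]
          · intro h; exact absurd (Finset.mem_univ _) h
        have hz : T ⟨p+1, hp1⟩ ⟨p, Nat.lt_of_succ_lt hp1⟩ * w ⟨p, Nat.lt_of_succ_lt hp1⟩ = 0 := by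
          rw [← hsum, hrow, Pi.smul_apply, smul_eq_mul, hw1, mul_zero]
        rcases mul_eq_zero.mp hz with h | h
        · exact absurd h (hsub p hp1)
        · exact h
  funext p
  have h := claim n p.1 p.2 (by omega)
  rw [Fin.eta] at h
  simpa using h

lemma jacobi_no_common_eig {n : ℕ} (hn : 1 ≤ n) (T : Matrix (Fin (n+1)) (Fin (n+1)) ℝ)
    (hsym : Tᵀ = T)
    (htri : ∀ p q : Fin (n+1), (q : ℕ) + 2 ≤ (p : ℕ) → T p q = 0)
    (hsub : ∀ (p : ℕ) (h : p + 1 < n + 1), T ⟨p+1, h⟩ ⟨p, Nat.lt_of_succ_lt h⟩ ≠ 0)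
    (lam : ℝ) (v : Fin n → ℝ) (hv : v ≠ 0)
    (hveig : (fun p q : Fin n => T p.castSucc q.castSucc) *ᵥ v = lam • v)
    (w : Fin (n+1) → ℝ) (hw : w ≠ 0) (hweig : T *ᵥ w = lam • w) : False := by
  classical
  set T0 : Matrix (Fin n) (Fin n) ℝ := fun p q => T p.castSucc q.castSucc with hT0
  have hvlast : v ⟨n-1, by omega⟩ ≠ 0 := by
    intro h0
    apply hv
    refine tri_eigvec_zero T0 ?_ ?_ lam v hveig (by omega) h0
    · intro p q hpq
      exact htri p.castSucc q.castSucc (by simpa using hpq)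
    · intro p h
      exact hsub p (by omega)
  have hwlast : w ⟨n, by omega⟩ ≠ 0 := by
    intro h0
    apply hw
    refine tri_eigvec_zero T htri hsub lam w hweig (by omega) ?_
    have he : (⟨n+1-1, by omega⟩ : Fin (n+1)) = ⟨n, by omega⟩ := by
      apply Fin.ext; show n + 1 - 1 = n; omega
    rw [he]; exact h0
  set vt : Fin (n+1) → ℝ := fun p => if h : p.1 < n then v ⟨p.1, h⟩ else 0 with hvt
  set en : Fin (n+1) → ℝ := fun p => if p.1 = n then 1 else 0 with hen
  set cc : ℝ := T ⟨n, by omega⟩ ⟨n-1, by omega⟩ * v ⟨n-1, by omega⟩ with hcc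
  have key : T *ᵥ vt = lam • vt + cc • en := by
    funext p
    have hsplit : (T *ᵥ vt) p = ∑ q : Fin n, T p q.castSucc * v q := by
      show ∑ q, T p q * vt q = _
      rw [Fin.sum_univ_castSucc (f := fun q => T p q * vt q)]
      have hlastterm : T p (Fin.last n) * vt (Fin.last n) = 0 := by
        have : vt (Fin.last n) = 0 := by simp [hvt, Fin.last]
        rw [this, mul_zero]
      rw [hlastterm, add_zero]
      apply Finset.sum_congr rfl
      intro q _
      congr 1
      simp [hvt, Fin.castSucc, q.2]
    by_cases hp : p.1 < n
    · have h1 : ∑ q : Fin n, T p q.castSucc * v q = (T0 *ᵥ v) ⟨p.1, hp⟩ := by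
        show _ = ∑ q, T0 ⟨p.1, hp⟩ q * v q
        apply Finset.sum_congr rfl
        intro q _
        rfl
      rw [hsplit, h1, hveig]
      have hpn : p.1 ≠ n := by omega
      simp [hvt, hen, hp, hpn, Pi.smul_apply]
    · have hpn : p.1 = n := by omega
      rw [hsplit]
      have hsum : ∑ q : Fin n, T p q.castSucc * v q = cc := by
        rw [hcc]
        have := Finset.sum_eq_single (s := Finset.univ) (⟨n-1, by omega⟩ : Fin n)
          (f := fun q => T p q.castSucc * v q) ?_ ?_
        · rw [this]
          congr 2
          exact Fin.ext hpn
        · intro q _ hq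
          have hql : q.1 + 2 ≤ p.1 := by
            have h1 : q.1 ≠ n - 1 := fun h => hq (Fin.ext h)
            have h2 := q.2
            omega
          show T p q.castSucc * v q = 0
          rw [htri p q.castSucc (by simpa using hql), zero_mul]
        · intro h; exact absurd (Finset.mem_univ _) h
      rw [hsum]
      have hvtp : vt p = 0 := by simp [hvt, hp]
      have henp : en p = 1 := by simp [hen, hpn]
      simp [hvtp, henp, Pi.smul_apply]
  have pair1 : w ⬝ᵥ (T *ᵥ vt) = lam * (w ⬝ᵥ vt) := by
    rw [Matrix.dotProduct_mulVec]
    have hvm : w ᵥ* T = T *ᵥ w := by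
      conv_lhs => rw [← hsym]
      rw [Matrix.vecMul_transpose]
    rw [hvm, hweig, smul_dotProduct, smul_eq_mul]
  have pair2 : w ⬝ᵥ (T *ᵥ vt) = lam * (w ⬝ᵥ vt) + cc * w ⟨n, by omega⟩ := by
    rw [key, dotProduct_add, dotProduct_smul, smul_eq_mul,
      dotProduct_smul, smul_eq_mul]
    congr 1
    congr 1
    show ∑ q, w q * en q = _
    have := Finset.sum_eq_single (s := Finset.univ) (⟨n, by omega⟩ : Fin (n+1))
      (f := fun q => w q * en q) ?_ ?_
    · rw [this]
      have : en ⟨n, by omega⟩ = 1 := by simp [hen]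
      rw [this, mul_one]
    · intro q _ hq
      show w q * en q = 0
      have : en q = 0 := by
        simp only [hen]
        rw [if_neg (fun h => hq (Fin.ext h))]
      rw [this, mul_zero]
    · intro h; exact absurd (Finset.mem_univ _) h
  have hzero : cc * w ⟨n, by omega⟩ = 0 := by
    have := pair1.symm.trans pair2
    linarith
  have hccne : cc ≠ 0 := by
    rw [hcc]
    apply mul_ne_zero _ hvlast
    have h := hsub (n-1) (by omega)
    have he : (⟨n-1+1, by omega⟩ : Fin (n+1)) = ⟨n, by omega⟩ := by
      apply Fin.ext; show n - 1 + 1 = n; omega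
    rw [he] at h
    exact h
  exact hwlast (by
    rcases mul_eq_zero.mp hzero with h | h
    · exact absurd h hccne
    · exact h)

lemma bidiag_tri {m nn : ℕ} (B : Matrix (Fin m) (Fin nn) ℝ) (a bb : Fin nn → ℝ)
    (hB : ∀ i j, B i j = if (i:ℕ) = (j:ℕ) then a j else if (i:ℕ) = (j:ℕ)+1 then bb j else 0) :
    ∀ p q : Fin nn, (q:ℕ) + 2 ≤ (p:ℕ) → (Bᵀ * B) p q = 0 := by
  intro p q hpq
  rw [Matrix.mul_apply]
  apply Finset.sum_eq_zero
  intro i _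
  rw [Matrix.transpose_apply, hB, hB]
  split_ifs <;> first | ring1 | (exfalso; omega) | (exfalso; simp only [Fin.val_mk] at *; omega)

lemma bidiag_sub {m nn : ℕ} (B : Matrix (Fin m) (Fin nn) ℝ) (a bb : Fin nn → ℝ)
    (hB : ∀ i j, B i j = if (i:ℕ) = (j:ℕ) then a j else if (i:ℕ) = (j:ℕ)+1 then bb j else 0)
    (p : ℕ) (h : p + 1 < nn) (hrow : p + 1 < m) :
    (Bᵀ * B) ⟨p+1, h⟩ ⟨p, Nat.lt_of_succ_lt h⟩
      = bb ⟨p, Nat.lt_of_succ_lt h⟩ * a ⟨p+1, h⟩ := by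
  rw [Matrix.mul_apply]
  have key := Finset.sum_eq_single (s := Finset.univ) (⟨p+1, hrow⟩ : Fin m)
    (f := fun i => Bᵀ ⟨p+1, h⟩ i * B i ⟨p, Nat.lt_of_succ_lt h⟩) ?_ ?_
  · rw [key]
    show B ⟨p+1, hrow⟩ ⟨p+1, h⟩ * B ⟨p+1, hrow⟩ ⟨p, Nat.lt_of_succ_lt h⟩ = _
    rw [hB, hB]
    rw [if_pos rfl]
    rw [if_neg (by omega : ¬ (p+1 : ℕ) = p), if_pos rfl]
    ring
  · intro i _ hi
    have hival : (i : ℕ) ≠ p + 1 := fun h' => hi (Fin.ext h')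
    show B i ⟨p+1, h⟩ * B i ⟨p, Nat.lt_of_succ_lt h⟩ = 0
    rw [hB, hB]
    split_ifs <;> first | ring1 | (exfalso; omega) | (exfalso; simp only [Fin.val_mk] at *; omega)
  · intro h'; exact absurd (Finset.mem_univ _) h'

lemma bidiag_symm {m nn : ℕ} (B : Matrix (Fin m) (Fin nn) ℝ) : (Bᵀ * B)ᵀ = Bᵀ * B := by
  rw [Matrix.transpose_mul, Matrix.transpose_transpose]

theorem singVal_sq_eig {a b : ℕ} (M : Matrix (Fin a) (Fin b) ℝ) (j : ℕ)
    (hj1 : 1 ≤ j) (hjb : j ≤ b) :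
    ∃ v : Fin b → ℝ, v ≠ 0 ∧ (Mᵀ * M) *ᵥ v = (singVal M j ^ 2) • v := by
  classical
  obtain ⟨ν, u, hν, heig, horth⟩ := exists_eigsystem M
  set J : Fin b := ⟨j - 1, by omega⟩ with hJ
  have hν0 : ∀ i, 0 ≤ ν i := by
    intro i
    have h1 : u i ⬝ᵥ ((Mᵀ * M) *ᵥ u i) = ν i * (u i ⬝ᵥ u i) := by
      rw [heig i, dotProduct_smul, smul_eq_mul]
    rw [dot_A, horth i i, if_pos rfl, mul_one] at h1
    rw [← h1]
    apply Finset.sum_nonneg; intro p _; exact mul_self_nonneg _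
  -- upper bound
  have upper : singVal M j ≤ Real.sqrt (ν J) := by
    set t := j - 1 with hst
    set S : Finset (Fin b) := Finset.univ.filter (fun i => i.1 < t) with hS
    have hmemS : ∀ i : Fin b, i ∈ S ↔ i.1 < t := by
      intro i; simp [hS]
    set P : Matrix (Fin b) (Fin b) ℝ := fun p q => ∑ i ∈ S, u i p * u i q with hP
    have hrankP : P.rank ≤ t := by
      set V : Matrix {i : Fin b // i.1 < t} (Fin b) ℝ := fun i p => u i.1 p with hV
      have hPV : P = Vᵀ * V := by
        ext p q
        rw [Matrix.mul_apply]
        have e : ∀ (i : {i : Fin b // i.1 < t}), Vᵀ p i * V i q = u i.1 p * u i.1 q :=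
          fun i => rfl
        simp_rw [e]
        rw [← Finset.sum_subtype S hmemS (fun i => u i p * u i q)]
      rw [hPV]
      calc (Vᵀ * V).rank ≤ V.rank := Matrix.rank_mul_le_right _ _
        _ ≤ Fintype.card {i : Fin b // i.1 < t} := Matrix.rank_le_card_height V
        _ = t := cardlt (by omega)
    have hrankD : (M * P).rank < j :=
      lt_of_le_of_lt (le_trans (Matrix.rank_mul_le_right M P) hrankP) (by omega)
    have h1 : singVal M j ≤ specNorm (M - M * P) :=
      csInf_le (singVal_bddBelow M j) ⟨M * P, hrankD, rfl⟩
    have hnorm : specNorm (M - M * P) ≤ Real.sqrt (ν J) := by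
      apply specNorm_le_of _ _ (Real.sqrt_nonneg _)
      intro x
      rw [Real.sq_sqrt (hν0 J)]
      set c : Fin b → ℝ := fun i => u i ⬝ᵥ x with hc
      have hx : x = ∑ i, c i • u i := sum_repr_of_orthonormal u horth x
      have hPx : P *ᵥ x = ∑ i ∈ S, c i • u i := by
        funext p
        have e1 : (P *ᵥ x) p = ∑ q, P p q * x q := rfl
        have e2 : ∀ q, P p q * x q = ∑ i ∈ S, u i p * (u i q * x q) := by
          intro q
          show (∑ i ∈ S, u i p * u i q) * x q = _
          rw [Finset.sum_mul]
          exact Finset.sum_congr rfl fun i _ => by ring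
        rw [e1]
        simp_rw [e2]
        rw [Finset.sum_comm]
        have e3 : ∀ i, ∑ q, u i p * (u i q * x q) = c i * u i p := by
          intro i
          rw [← Finset.mul_sum]
          have e4 : ∑ q, u i q * x q = c i := rfl
          rw [e4]; ring
        simp_rw [e3]
        rw [Finset.sum_apply]
        exact Finset.sum_congr rfl fun i _ => by simp [mul_comm]
      have hsub2 : (M - M * P) *ᵥ x = M *ᵥ (x - P *ᵥ x) := by
        rw [Matrix.sub_mulVec, ← Matrix.mulVec_mulVec, ← Matrix.mulVec_sub]
      set d : Fin b → ℝ := fun i => if i ∈ S then 0 else c i with hd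
      have hyd : x - P *ᵥ x = ∑ i, d i • u i := by
        rw [hPx]
        conv_lhs => rw [hx]
        have e5 : ∑ i ∈ S, c i • u i = ∑ i, (if i ∈ S then c i else 0) • u i := by
          have e5a : ∀ i ∈ S, c i • u i = (if i ∈ S then c i else 0) • u i :=
            fun i hi => by rw [if_pos hi]
          rw [Finset.sum_congr rfl e5a]
          exact Finset.sum_subset (Finset.subset_univ S)
            (fun i _ hi => by rw [if_neg hi, zero_smul])
        rw [e5, ← Finset.sum_sub_distrib]
        apply Finset.sum_congr rfl
        intro i _
        rw [← sub_smul]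
        congr 1
        simp only [hd]
        split_ifs <;> ring
      rw [hsub2, hyd]
      have hq := quad_eval M ν u heig horth d
      rw [hq.1]
      have e6 : x ⬝ᵥ x = ∑ i, c i ^ 2 := by
        conv_lhs => rw [hx]
        exact (quad_eval M ν u heig horth c).2
      rw [e6, Finset.mul_sum]
      apply Finset.sum_le_sum
      intro i _
      by_cases hiS : i ∈ S
      · simp only [hd, if_pos hiS]
        have : (0:ℝ) ^ 2 = 0 := by norm_num
        rw [this, mul_zero]
        exact mul_nonneg (hν0 J) (sq_nonneg _)
      · simp only [hd, if_neg hiS]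
        have hJi : J ≤ i := by
          have := (hmemS i).not.mp hiS
          rw [Fin.le_def]
          simp only [hJ]
          omega
        exact mul_le_mul_of_nonneg_right (hν hJi) (sq_nonneg _)
    exact h1.trans hnorm
  -- lower bound
  have lower : Real.sqrt (ν J) ≤ singVal M j := by
    apply le_csInf (singVal_nonempty M j hj1)
    rintro r ⟨Dm, hDm, rfl⟩
    set W : Submodule ℝ (Fin b → ℝ) :=
      Submodule.span ℝ (Set.range (fun i : {i : Fin b // i.1 < j} => u i.1)) with hW
    have hWrank : Module.finrank ℝ W = j := by
      have hind : LinearIndependent ℝ u := by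
        rw [Fintype.linearIndependent_iff]
        intro g hg i
        have h := congrArg (fun y => u i ⬝ᵥ y) hg
        beta_reduce at h
        rw [dot_right u horth g i] at h
        simpa using h
      have hind2 : LinearIndependent ℝ (fun i : {i : Fin b // i.1 < j} => u i.1) :=
        hind.comp _ Subtype.val_injective
      rw [hW, finrank_span_eq_card hind2, cardlt hjb]
    have hr : Dm.rank = Module.finrank ℝ (LinearMap.range Dm.mulVecLin) := rfl
    have hKrank : Module.finrank ℝ (LinearMap.ker (Matrix.mulVecLin Dm)) + Dm.rank = b := by
      have h := LinearMap.finrank_range_add_finrank_ker (Matrix.mulVecLin Dm)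
      rw [Module.finrank_fin_fun] at h
      rw [hr]
      omega
    have hne : W ⊓ LinearMap.ker (Matrix.mulVecLin Dm) ≠ ⊥ := by
      intro hbot
      have hdis : Disjoint W (LinearMap.ker (Matrix.mulVecLin Dm)) := disjoint_iff.mpr hbot
      have hle := Submodule.finrank_add_finrank_le_of_disjoint hdis
      rw [hWrank, Module.finrank_fin_fun] at hle
      omega
    obtain ⟨x, hxmem, hx0⟩ := (Submodule.ne_bot_iff _).mp hne
    have hxW : x ∈ W := (Submodule.mem_inf.mp hxmem).1
    have hxK : x ∈ LinearMap.ker (Matrix.mulVecLin Dm) := (Submodule.mem_inf.mp hxmem).2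
    set c : Fin b → ℝ := fun i => u i ⬝ᵥ x with hc
    have hc0 : ∀ i : Fin b, ¬(i.1 < j) → c i = 0 := by
      intro i hi
      refine Submodule.span_induction (p := fun y _ => u i ⬝ᵥ y = 0) ?_ ?_ ?_ ?_ hxW
      · rintro _ ⟨l, rfl⟩
        rw [horth]
        rw [if_neg]
        intro h
        exact hi (h ▸ l.2)
      · simp
      · intro y z _ _ hy hz
        rw [dotProduct_add, hy, hz, add_zero]
      · intro r y _ hy
        rw [dotProduct_smul, hy, smul_zero]
    have hx : x = ∑ i, c i • u i := sum_repr_of_orthonormal u horth x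
    have hDx : Dm *ᵥ x = 0 := by
      have h := LinearMap.mem_ker.mp hxK
      rwa [Matrix.mulVecLin_apply] at h
    have hMD : (M - Dm) *ᵥ x = M *ᵥ x := by
      rw [Matrix.sub_mulVec, hDx, sub_zero]
    have hq := quad_eval M ν u heig horth c
    have h1 : ((M - Dm) *ᵥ x) ⬝ᵥ ((M - Dm) *ᵥ x) ≤ specNorm (M - Dm) ^ 2 * (x ⬝ᵥ x) :=
      mulVec_dot_le_specNorm _ _
    rw [hMD] at h1
    have e1 : (M *ᵥ x) ⬝ᵥ (M *ᵥ x) = ∑ i, ν i * c i ^ 2 := by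
      conv_lhs => rw [hx]
      exact hq.1
    have e2 : x ⬝ᵥ x = ∑ i, c i ^ 2 := by
      conv_lhs => rw [hx]
      exact hq.2
    have h2 : ν J * (x ⬝ᵥ x) ≤ (M *ᵥ x) ⬝ᵥ (M *ᵥ x) := by
      rw [e1, e2, Finset.mul_sum]
      apply Finset.sum_le_sum
      intro i _
      by_cases hij : i.1 < j
      · have hiJ : i ≤ J := by
          rw [Fin.le_def]
          simp only [hJ]
          omega
        exact mul_le_mul_of_nonneg_right (hν hiJ) (sq_nonneg _)
      · rw [hc0 i hij]
        have : (0:ℝ) ^ 2 = 0 := by norm_num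
        rw [this, mul_zero, mul_zero]
    have hxx : 0 < x ⬝ᵥ x := dotProduct_self_pos x hx0
    have hfin : ν J ≤ specNorm (M - Dm) ^ 2 :=
      le_of_mul_le_mul_right (h2.trans h1) hxx
    calc Real.sqrt (ν J) ≤ Real.sqrt (specNorm (M - Dm) ^ 2) := Real.sqrt_le_sqrt hfin
      _ = specNorm (M - Dm) := Real.sqrt_sq (specNorm_nonneg _)
  have heq : singVal M j = Real.sqrt (ν J) := le_antisymm upper lower
  refine ⟨u J, ?_, ?_⟩
  · intro h0
    have h := horth J J
    rw [h0, if_pos rfl] at h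
    simp at h
  · rw [heq, Real.sq_sqrt (hν0 J), heig J]

/-- the singular values of `B̄_{k+1} = (B_k, α_{k+1} e_{k+1})` strictly interlace
those of the positive lower bidiagonal matrix `B_k`:
`θ̄_1 > θ_1 > θ̄_2 > θ_2 > ⋯ > θ̄_k > θ_k > θ̄_{k+1}`. -/
theorem singularValues_appended_column_strictly_interlace
    (k : ℕ) (hk : 1 ≤ k)
    (α : Fin k → ℝ) (hα : ∀ i, 0 < α i)
    (β : Fin k → ℝ) (hβ : ∀ i, 0 < β i)
    (Bk : Matrix (Fin (k + 1)) (Fin k) ℝ)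
    (hBk : ∀ (i : Fin (k + 1)) (j : Fin k),
      Bk i j = if (i : ℕ) = (j : ℕ) then α j
        else if (i : ℕ) = (j : ℕ) + 1 then β j else 0)
    (αlast : ℝ) (hαlast : 0 < αlast)
    (Bbar : Matrix (Fin (k + 1)) (Fin (k + 1)) ℝ)
    (hBbar : ∀ (i j : Fin (k + 1)),
      Bbar i j = if h : (j : ℕ) < k then Bk i ⟨(j : ℕ), h⟩
        else if (i : ℕ) = k then αlast else 0) :
    ∀ i : ℕ, 1 ≤ i → i ≤ k →
      (singVal Bk i < singVal Bbar i ∧ singVal Bbar (i + 1) < singVal Bk i) := by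
  intro i hi1 hik
  -- Bk is the matrix of the first k columns of Bbar
  have hcol : colSub Bbar k (Nat.le_succ k) = Bk := by
    funext i' j
    show Bbar i' ⟨j.1, lt_of_lt_of_le j.2 (Nat.le_succ k)⟩ = Bk i' j
    rw [hBbar, dif_pos (show ((⟨j.1, lt_of_lt_of_le j.2 (Nat.le_succ k)⟩ : Fin (k+1)) : ℕ) < k from j.2)]
  -- weak inequalities
  have hle1 : singVal Bk i ≤ singVal Bbar i := by
    rw [← hcol]
    exact singVal_colSub_le Bbar k (Nat.le_succ k) i hi1
  have hle2 : singVal Bbar (i + 1) ≤ singVal Bk i := by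
    have h := singVal_succ_le_colSub Bbar i hi1
    rwa [hcol] at h
  -- entries of Bbar follow a bidiagonal pattern
  set γ : Fin (k+1) → ℝ := fun j => if h : j.1 < k then α ⟨j.1, h⟩ else αlast with hγdef
  set δ : Fin (k+1) → ℝ := fun j => if h : j.1 < k then β ⟨j.1, h⟩ else 1 with hδdef
  have hγ : ∀ j, 0 < γ j := by
    intro j
    simp only [hγdef]
    split_ifs
    · exact hα _
    · exact hαlast
  have hδ : ∀ j, 0 < δ j := by
    intro j
    simp only [hδdef]
    split_ifs
    · exact hβ _
    · exact one_pos
  have hBbar' : ∀ (i' : Fin (k+1)) (j : Fin (k+1)), Bbar i' j =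
      if (i' : ℕ) = (j : ℕ) then γ j else if (i' : ℕ) = (j : ℕ) + 1 then δ j else 0 := by
    intro i' j
    rw [hBbar]
    by_cases h : (j : ℕ) < k
    · rw [dif_pos h, hBk]
      have e1 : γ j = α ⟨j.1, h⟩ := dif_pos h
      have e2 : δ j = β ⟨j.1, h⟩ := dif_pos h
      rw [e1, e2]
    · have hjk : (j : ℕ) = k := by omega
      rw [dif_neg h]
      have e1 : γ j = αlast := dif_neg h
      have e2 : δ j = 1 := dif_neg h
      rw [e1, e2]
      have hi'2 := i'.2
      split_ifs <;> first | rfl | (exfalso; omega)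
  -- properties of T' = Bbarᵀ * Bbar
  have htriT' := bidiag_tri Bbar γ δ hBbar'
  have hsubT' : ∀ (p : ℕ) (h : p + 1 < k + 1),
      (Bbarᵀ * Bbar) ⟨p+1, h⟩ ⟨p, Nat.lt_of_succ_lt h⟩ ≠ 0 := by
    intro p h
    rw [bidiag_sub Bbar γ δ hBbar' p h h]
    exact ne_of_gt (mul_pos (hδ _) (hγ _))
  have hsymT' := bidiag_symm Bbar
  have hblock : (fun p q : Fin k => (Bbarᵀ * Bbar) p.castSucc q.castSucc) = Bkᵀ * Bk := by
    funext p q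
    rw [Matrix.mul_apply, Matrix.mul_apply]
    apply Finset.sum_congr rfl
    intro i' _
    rw [Matrix.transpose_apply, Matrix.transpose_apply]
    have ep : Bbar i' p.castSucc = Bk i' p := by
      rw [hBbar, dif_pos (show ((p.castSucc : Fin (k+1)) : ℕ) < k from p.2)]
      exact congrArg (Bk i') (Fin.ext rfl)
    have eq' : Bbar i' q.castSucc = Bk i' q := by
      rw [hBbar, dif_pos (show ((q.castSucc : Fin (k+1)) : ℕ) < k from q.2)]
      exact congrArg (Bk i') (Fin.ext rfl)
    rw [ep, eq']
  -- no common singular value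
  have hne : ∀ (i' j' : ℕ), 1 ≤ i' → i' ≤ k → 1 ≤ j' → j' ≤ k + 1 →
      singVal Bbar j' ≠ singVal Bk i' := by
    intro i' j' h1 h2 h3 h4 heq
    obtain ⟨v, hv0, hveig⟩ := singVal_sq_eig Bk i' h1 h2
    obtain ⟨w, hw0, hweig⟩ := singVal_sq_eig Bbar j' h3 h4
    rw [heq] at hweig
    refine jacobi_no_common_eig hk (Bbarᵀ * Bbar) hsymT' htriT' hsubT'
      (singVal Bk i' ^ 2) v hv0 ?_ w hw0 hweig
    rw [hblock]
    exact hveig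
  constructor
  · exact lt_of_le_of_ne hle1 (Ne.symm (hne i i hi1 hik hi1 (by omega)))
  · exact lt_of_le_of_ne hle2 (hne i (i + 1) hi1 hik (by omega) (by omega))
end

section
/- In the Golub–Kahan bidiagonalization setup, the LSMR approximation errors to AᵀA are strictly monotonically decreasing: for every k with 1 ≤ k ≤ n−2, ‖AᵀA − Q_{k+2}Q_{k+2}ᵀ(AᵀA)Q_{k+1}Q_{k+1}ᵀ‖ < ‖AᵀA − Q_{k+1}Q_{k+1}ᵀ(AᵀA)Q_kQ_kᵀ‖. -/
open Matrix

open scoped Matrix.Norms.L2Operator RealInnerProductSpace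

namespace LSMR

set_option maxHeartbeats 1000000

/-- Diagonal projection keeping coordinates with index `≥ k`. -/
noncomputable def Pmat (n k : ℕ) : Matrix (Fin n) (Fin n) ℝ :=
  Matrix.diagonal (fun i => if k ≤ (i : ℕ) then (1 : ℝ) else 0)

/-- Diagonal projection keeping coordinates with index `< k`. -/
noncomputable def Dmat (n k : ℕ) : Matrix (Fin n) (Fin n) ℝ :=
  Matrix.diagonal (fun i => if (i : ℕ) < k then (1 : ℝ) else 0)

lemma Pmat_transpose (n k : ℕ) : (Pmat n k)ᵀ = Pmat n k := Matrix.diagonal_transpose _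

lemma Pmat_mulVec (n k : ℕ) (v : Fin n → ℝ) (i : Fin n) :
    (Pmat n k *ᵥ v) i = if k ≤ (i : ℕ) then v i else 0 := by
  rw [Pmat, Matrix.mulVec_diagonal]
  split_ifs <;> ring

/-- Euclidean-space packaging of a plain vector. -/
noncomputable def ev {n : ℕ} (v : Fin n → ℝ) : EuclideanSpace ℝ (Fin n) :=
  (EuclideanSpace.equiv (Fin n) ℝ).symm v

lemma ev_apply {n : ℕ} (v : Fin n → ℝ) (i : Fin n) : ev v i = v i := rfl

lemma ev_smul {n : ℕ} (c : ℝ) (v : Fin n → ℝ) : ev (c • v) = c • ev v := rfl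

lemma norm_ev {n : ℕ} (v : Fin n → ℝ) : ‖ev v‖ = Real.sqrt (∑ i, v i ^ 2) := by
  rw [EuclideanSpace.norm_eq]
  congr 1
  refine Finset.sum_congr rfl fun i _ => ?_
  rw [ev_apply, Real.norm_eq_abs, sq_abs]

lemma norm_ev_le_of_abs_le {n : ℕ} {u v : Fin n → ℝ} (h : ∀ i, |u i| ≤ |v i|) :
    ‖ev u‖ ≤ ‖ev v‖ := by
  rw [norm_ev, norm_ev]
  apply Real.sqrt_le_sqrt
  refine Finset.sum_le_sum fun i _ => ?_
  rw [← sq_abs (u i), ← sq_abs (v i)]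
  exact pow_le_pow_left₀ (abs_nonneg _) (h i) 2

lemma coord_le_norm {n : ℕ} (v : Fin n → ℝ) (i : Fin n) : |v i| ≤ ‖ev v‖ := by
  rw [norm_ev, ← Real.sqrt_sq_eq_abs]
  apply Real.sqrt_le_sqrt
  exact Finset.single_le_sum (f := fun j => v j ^ 2) (fun j _ => sq_nonneg _) (Finset.mem_univ i)

lemma inner_ev {n : ℕ} (u v : Fin n → ℝ) : ⟪ev u, ev v⟫ = ∑ i, u i * v i := by
  simp [PiLp.inner_apply, RCLike.inner_apply, ev_apply, mul_comm]

lemma mulVec_norm_le {n : ℕ} (M : Matrix (Fin n) (Fin n) ℝ) (v : Fin n → ℝ) :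
    ‖ev (M *ᵥ v)‖ ≤ ‖M‖ * ‖ev v‖ := M.l2_opNorm_mulVec (ev v)

lemma inner_transpose_mulVec {n : ℕ} (M : Matrix (Fin n) (Fin n) ℝ) (u v : Fin n → ℝ) :
    ⟪ev (Mᵀ *ᵥ u), ev v⟫ = ⟪ev u, ev (M *ᵥ v)⟫ := by
  rw [inner_ev, inner_ev]
  simp only [Matrix.mulVec, dotProduct, Matrix.transpose_apply]
  simp_rw [Finset.sum_mul, Finset.mul_sum]
  rw [Finset.sum_comm]
  refine Finset.sum_congr rfl fun i _ => Finset.sum_congr rfl fun j _ => by ring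

lemma norm_transpose_mul_self {n : ℕ} (M : Matrix (Fin n) (Fin n) ℝ) :
    ‖Mᵀ * M‖ = ‖M‖ * ‖M‖ := by
  have h : Mᴴ = Mᵀ := by ext i j; simp [Matrix.conjTranspose_apply]
  rw [← h]; exact Matrix.l2_opNorm_conjTranspose_mul_self M

lemma norm_transpose {n : ℕ} (M : Matrix (Fin n) (Fin n) ℝ) : ‖Mᵀ‖ = ‖M‖ := by
  have h : Mᴴ = Mᵀ := by ext i j; simp [Matrix.conjTranspose_apply]
  rw [← h]; exact Matrix.l2_opNorm_conjTranspose M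

lemma exists_attain {n : ℕ} (hn : 0 < n) (M : Matrix (Fin n) (Fin n) ℝ) :
    ∃ v : Fin n → ℝ, ‖ev v‖ = 1 ∧ ‖ev (M *ᵥ v)‖ = ‖M‖ := by
  suffices h : ∃ x : EuclideanSpace ℝ (Fin n), ‖x‖ = 1 ∧
      ‖Matrix.toEuclideanCLM (𝕜 := ℝ) M x‖ = ‖M‖ by
    obtain ⟨x, hx1, hx2⟩ := h
    refine ⟨fun i => x i, ?_, ?_⟩
    · have : ev (fun i => x i) = x := rfl
      rw [this, hx1]
    · have : ev (M *ᵥ fun i => x i) = Matrix.toEuclideanCLM (𝕜 := ℝ) M x := rfl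
      rw [this, hx2]
  set f := Matrix.toEuclideanCLM (𝕜 := ℝ) M with hf
  have hcs : IsCompact (Metric.sphere (0 : EuclideanSpace ℝ (Fin n)) 1) := isCompact_sphere _ _
  have hne : (Metric.sphere (0 : EuclideanSpace ℝ (Fin n)) 1).Nonempty := by
    haveI : Nontrivial (EuclideanSpace ℝ (Fin n)) := by
      refine ⟨EuclideanSpace.single ⟨0, hn⟩ 1, 0, fun h => ?_⟩
      have := congrFun (congrArg (fun z : EuclideanSpace ℝ (Fin n) => (z : Fin n → ℝ)) h) ⟨0, hn⟩
      simp [EuclideanSpace.single] at this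
    exact NormedSpace.sphere_nonempty.mpr (by norm_num)
  obtain ⟨x, hxs, hmax⟩ := hcs.exists_isMaxOn hne ((continuous_norm.comp f.continuous).continuousOn)
  have hx1 : ‖x‖ = 1 := by simpa using hxs
  have hle : ‖f x‖ ≤ ‖M‖ := by
    have h0 := f.le_opNorm x
    rw [hx1, mul_one] at h0
    exact h0
  refine ⟨x, hx1, le_antisymm hle ?_⟩
  rw [Matrix.cstar_norm_def]
  refine ContinuousLinearMap.opNorm_le_bound _ (norm_nonneg _) (fun y => ?_)
  rcases eq_or_ne y 0 with rfl | hy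
  · simp
  · have hyn : ‖y‖ ≠ 0 := norm_ne_zero_iff.mpr hy
    have hmem : (‖y‖⁻¹ • y) ∈ Metric.sphere (0 : EuclideanSpace ℝ (Fin n)) 1 := by
      simp [norm_smul, abs_of_nonneg, inv_mul_cancel₀ hyn]
    have h2 := hmax hmem
    simp only [Set.mem_setOf_eq, Function.comp_apply, f.map_smul, norm_smul, norm_inv,
      norm_norm] at h2
    calc ‖f y‖ = ‖y‖ * (‖y‖⁻¹ * ‖f y‖) := by field_simp
    _ ≤ ‖y‖ * ‖f x‖ := mul_le_mul_of_nonneg_left h2 (norm_nonneg _)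
    _ = ‖f x‖ * ‖y‖ := mul_comm _ _

theorem core {n : ℕ} (k : ℕ) (hk : k < n) (T : Matrix (Fin n) (Fin n) ℝ)
    (hnn : ∀ i j, 0 ≤ T i j)
    (hdiag : ∀ i, 0 < T i i)
    (hsup : ∀ (j : ℕ) (hj : j + 1 < n), 0 < T ⟨j, by omega⟩ ⟨j + 1, hj⟩) :
    ‖T * Pmat n (k + 1)‖ < ‖T * Pmat n k‖ := by
  set N := ‖T * Pmat n k‖ with hN
  -- the Gram matrix
  set G := Tᵀ * T with hG
  have hGnn : ∀ i j, 0 ≤ G i j := by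
    intro i j
    have h0 : G i j = ∑ l, T l i * T l j := rfl
    rw [h0]
    exact Finset.sum_nonneg fun l _ => mul_nonneg (hnn l i) (hnn l j)
  have hGsup : ∀ (j : ℕ) (hj : j + 1 < n), 0 < G ⟨j, by omega⟩ ⟨j + 1, hj⟩ := by
    intro j hj
    have : G ⟨j, by omega⟩ ⟨j + 1, hj⟩ = ∑ l, T l ⟨j, by omega⟩ * T l ⟨j + 1, hj⟩ := rfl
    rw [this]
    refine Finset.sum_pos' (fun l _ => mul_nonneg (hnn _ _) (hnn _ _)) ?_
    exact ⟨⟨j, by omega⟩, Finset.mem_univ _, mul_pos (hdiag _) (hsup j hj)⟩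
  -- positivity of N
  have hNpos : 0 < N := by
    set ek : Fin n → ℝ := fun j => if j = ⟨k, hk⟩ then 1 else 0 with hek
    have h1 : ((T * Pmat n k) *ᵥ ek) ⟨k, hk⟩ = T ⟨k, hk⟩ ⟨k, hk⟩ := by
      have e1 : ((T * Pmat n k) *ᵥ ek) ⟨k, hk⟩ = ∑ j, (T * Pmat n k) ⟨k, hk⟩ j * ek j := rfl
      rw [e1, hek]
      simp only [mul_ite, mul_one, mul_zero]
      rw [Finset.sum_ite_eq' Finset.univ (⟨k, hk⟩ : Fin n) (fun j => (T * Pmat n k) ⟨k, hk⟩ j)]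
      simp only [Finset.mem_univ, if_pos]
      rw [Pmat, Matrix.mul_diagonal, if_pos (le_refl k), mul_one]
    have h2 : |T ⟨k, hk⟩ ⟨k, hk⟩| ≤ ‖ev ((T * Pmat n k) *ᵥ ek)‖ := by
      rw [← h1]; exact coord_le_norm _ _
    have h3 : ‖ev ek‖ = 1 := by
      rw [norm_ev, hek]
      have e2 : ∀ j : Fin n, (if j = (⟨k, hk⟩ : Fin n) then (1:ℝ) else 0) ^ 2
          = if j = ⟨k, hk⟩ then 1 else 0 := by
        intro j; split_ifs <;> norm_num
      rw [Finset.sum_congr rfl fun j _ => e2 j]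
      rw [Finset.sum_ite_eq' Finset.univ (⟨k, hk⟩ : Fin n) (fun _ => (1:ℝ))]
      simp
    have h4 := mulVec_norm_le (T * Pmat n k) ek
    rw [h3, mul_one] at h4
    calc (0 : ℝ) < T ⟨k, hk⟩ ⟨k, hk⟩ := hdiag _
    _ ≤ |T ⟨k, hk⟩ ⟨k, hk⟩| := le_abs_self _
    _ ≤ N := le_trans h2 h4
  by_contra hcon
  push_neg at hcon
  -- hcon : N ≤ ‖T * Pmat n (k+1)‖
  obtain ⟨x, hx1, hxmax⟩ := exists_attain (show 0 < n by omega) (T * Pmat n (k + 1))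
  set w : Fin n → ℝ := Pmat n (k + 1) *ᵥ x with hw
  have hTw : (T * Pmat n (k + 1)) *ᵥ x = T *ᵥ w := by
    rw [hw, Matrix.mulVec_mulVec]
  by_cases hw0 : w = 0
  · rw [hTw, hw0] at hxmax
    simp only [Matrix.mulVec_zero] at hxmax
    have h0 : ‖ev (0 : Fin n → ℝ)‖ = 0 := by rw [norm_ev]; simp
    rw [h0] at hxmax
    rw [← hxmax] at hcon
    linarith
  · -- normalize
    have hwabs : ∀ i, |w i| ≤ |x i| := by
      intro i
      rw [hw, Pmat_mulVec]
      split_ifs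
      · exact le_refl _
      · rw [abs_zero]; exact abs_nonneg _
    set c : ℝ := ‖ev w‖ with hc
    have hcpos : 0 < c := by
      rcases eq_or_lt_of_le (norm_nonneg (ev w)) with h | h
      · exfalso; apply hw0
        have h0 : ev w = 0 := norm_eq_zero.mp h.symm
        funext i
        exact congrFun (congrArg (fun z : EuclideanSpace ℝ (Fin n) => (z : Fin n → ℝ)) h0) i
      · exact h
    have hcle1 : c ≤ 1 := by
      rw [hc, ← hx1]; exact norm_ev_le_of_abs_le hwabs
    set x' : Fin n → ℝ := c⁻¹ • w with hx'
    set y : Fin n → ℝ := fun i => |x' i| with hy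
    have hysupp : ∀ i : Fin n, (i : ℕ) < k + 1 → y i = 0 := by
      intro i hi
      rw [hy]
      simp only [hx', Pi.smul_apply, smul_eq_mul]
      rw [hw, Pmat_mulVec, if_neg (by omega)]
      simp
    have hynn : ∀ i, 0 ≤ y i := fun i => abs_nonneg _
    have hyx' : ‖ev y‖ = ‖ev x'‖ := by
      rw [norm_ev, norm_ev]
      congr 1
      refine Finset.sum_congr rfl fun i _ => ?_
      rw [hy]; exact sq_abs _
    have hy1 : ‖ev y‖ = 1 := by
      rw [hyx', hx', ev_smul, norm_smul, ← hc, Real.norm_eq_abs,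
        abs_of_pos (inv_pos.mpr hcpos), inv_mul_cancel₀ (ne_of_gt hcpos)]
    have hPky : Pmat n k *ᵥ y = y := by
      funext i
      rw [Pmat_mulVec]
      split_ifs with h
      · rfl
      · exact (hysupp i (by omega)).symm
    have hTx' : ‖ev (T *ᵥ x')‖ = c⁻¹ * ‖T * Pmat n (k + 1)‖ := by
      rw [hx', Matrix.mulVec_smul, ev_smul, norm_smul, Real.norm_eq_abs,
        abs_of_pos (inv_pos.mpr hcpos), ← hTw, hxmax]
    have hNleTx' : N ≤ ‖ev (T *ᵥ x')‖ := by
      rw [hTx']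
      have h2 : ‖T * Pmat n (k + 1)‖ ≤ c⁻¹ * ‖T * Pmat n (k + 1)‖ := by
        have hcc : c * c⁻¹ = 1 := mul_inv_cancel₀ (ne_of_gt hcpos)
        have h3 : (1 : ℝ) ≤ c⁻¹ := by nlinarith
        nlinarith [le_trans (le_of_lt hNpos) hcon]
      exact le_trans hcon h2
    have habs2 : ∀ i, |(T *ᵥ x') i| ≤ |(T *ᵥ y) i| := by
      intro i
      have h1 : |(T *ᵥ x') i| ≤ (T *ᵥ y) i := by
        have e1 : (T *ᵥ x') i = ∑ j, T i j * x' j := rfl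
        have e2 : (T *ᵥ y) i = ∑ j, T i j * y j := rfl
        rw [e1, e2]
        calc |∑ j, T i j * x' j| ≤ ∑ j, |T i j * x' j| := Finset.abs_sum_le_sum_abs _ _
        _ = ∑ j, T i j * y j := by
            refine Finset.sum_congr rfl fun j _ => ?_
            rw [abs_mul, abs_of_nonneg (hnn i j), hy]
      exact le_trans h1 (le_abs_self _)
    have hyT : ‖ev (T *ᵥ y)‖ = N := by
      apply le_antisymm
      · have e3 : T *ᵥ y = (T * Pmat n k) *ᵥ y := by
          rw [← Matrix.mulVec_mulVec, hPky]
        rw [e3]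
        have h5 := mulVec_norm_le (T * Pmat n k) y
        rw [hy1, mul_one] at h5
        exact h5
      · exact le_trans hNleTx' (norm_ev_le_of_abs_le habs2)
    -- eigenvector step
    set S := (T * Pmat n k)ᵀ * (T * Pmat n k) with hS
    have hSnorm : ‖S‖ = N * N := norm_transpose_mul_self _
    have hSy : S *ᵥ y = (T * Pmat n k)ᵀ *ᵥ (T *ᵥ y) := by
      rw [hS, ← Matrix.mulVec_mulVec]
      congr 1
      rw [← Matrix.mulVec_mulVec, hPky]
    have hinner : ⟪ev (S *ᵥ y), ev y⟫ = N ^ 2 := by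
      rw [hSy, inner_transpose_mulVec]
      have e4 : (T * Pmat n k) *ᵥ y = T *ᵥ y := by
        rw [← Matrix.mulVec_mulVec, hPky]
      rw [e4, real_inner_self_eq_norm_sq, hyT]
    have hSyle : ‖ev (S *ᵥ y)‖ ≤ N * N := by
      have h6 := mulVec_norm_le S y
      rw [hy1, mul_one, hSnorm] at h6
      exact h6
    have hSyge : N ^ 2 ≤ ‖ev (S *ᵥ y)‖ := by
      have h7 := real_inner_le_norm (ev (S *ᵥ y)) (ev y)
      rw [hinner, hy1, mul_one] at h7
      exact h7
    have hSyN : ‖ev (S *ᵥ y)‖ = N ^ 2 := le_antisymm (by nlinarith) hSyge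
    have hCS : ⟪ev (S *ᵥ y), ev y⟫ = ‖ev (S *ᵥ y)‖ * ‖ev y‖ := by
      rw [hinner, hSyN, hy1, mul_one]
    have heig := inner_eq_norm_mul_iff_real.mp hCS
    -- coordinates
    have hcoord : ∀ i, (S *ᵥ y) i = N ^ 2 * y i := by
      intro i
      have h8 : (‖ev y‖ • ev (S *ᵥ y)) i = ‖ev (S *ᵥ y)‖ * y i := by
        rw [heig]; rfl
      have h9 : (‖ev y‖ • ev (S *ᵥ y)) i = ‖ev y‖ * (S *ᵥ y) i := rfl
      rw [h9, hy1, one_mul, hSyN] at h8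
      exact h8
    have hrow : ∀ i : Fin n, k ≤ (i : ℕ) → (G *ᵥ y) i = N ^ 2 * y i := by
      intro i hi
      have h10 := hcoord i
      have hSmat : S = Pmat n k * (G * Pmat n k) := by
        rw [hS, hG, Matrix.transpose_mul, Pmat_transpose]
        simp only [Matrix.mul_assoc]
      have h11 : S *ᵥ y = Pmat n k *ᵥ (G *ᵥ y) := by
        rw [hSmat, ← Matrix.mulVec_mulVec, ← Matrix.mulVec_mulVec, hPky]
      rw [h11, Pmat_mulVec, if_pos hi] at h10
      exact h10
    -- inductive vanishing
    have hzero : ∀ j : ℕ, ∀ hj : j < n, y ⟨j, hj⟩ = 0 := by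
      intro j
      induction j using Nat.strong_induction_on with
      | _ j IH =>
        intro hj
        by_cases hjk : j < k + 1
        · exact hysupp ⟨j, hj⟩ hjk
        · have hj1 : j - 1 < n := by omega
          have hk1 : k ≤ j - 1 := by omega
          have hprev : y ⟨j - 1, hj1⟩ = 0 := IH (j - 1) (by omega) hj1
          have h12 := hrow ⟨j - 1, hj1⟩ hk1
          rw [hprev, mul_zero] at h12
          have hsum : ∑ l, G ⟨j - 1, hj1⟩ l * y l = 0 := h12
          have hterm := (Finset.sum_eq_zero_iff_of_nonneg
            (fun l _ => mul_nonneg (hGnn _ _) (hynn l))).mp hsum ⟨j, hj⟩ (Finset.mem_univ _)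
          have hpos : 0 < G ⟨j - 1, hj1⟩ ⟨j, hj⟩ := by
            have h13 := hGsup (j - 1) (show (j - 1) + 1 < n by omega)
            have e5 : (⟨(j - 1) + 1, show (j - 1) + 1 < n by omega⟩ : Fin n) = ⟨j, hj⟩ :=
              Fin.ext (show j - 1 + 1 = j by omega)
            rwa [e5] at h13
          rcases mul_eq_zero.mp hterm with h | h
          · exact absurd h (ne_of_gt hpos)
          · exact h
    have hy0 : y = 0 := by
      funext i
      have := hzero i.val i.isLt
      simpa using this
    rw [hy0] at hy1
    have : ‖ev (0 : Fin n → ℝ)‖ = 0 := by rw [norm_ev]; simp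
    rw [this] at hy1
    exact one_ne_zero hy1.symm



lemma colSub_mul_transpose {n : ℕ} (Q : Matrix (Fin n) (Fin n) ℝ) (j : ℕ) (h : j ≤ n) :
    colSub Q j h * (colSub Q j h)ᵀ = Q * (Dmat n j * Qᵀ) := by
  ext a b
  have lhs : (colSub Q j h * (colSub Q j h)ᵀ) a b
      = ∑ l : Fin j, Q a ⟨l.1, lt_of_lt_of_le l.2 h⟩ * Q b ⟨l.1, lt_of_lt_of_le l.2 h⟩ := rfl
  have rhs : (Q * (Dmat n j * Qᵀ)) a b
      = ∑ c, Q a c * ((if (c : ℕ) < j then (1:ℝ) else 0) * Q b c) := by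
    rw [Matrix.mul_apply]
    refine Finset.sum_congr rfl fun c _ => ?_
    rw [Dmat, Matrix.diagonal_mul, Matrix.transpose_apply]
  rw [lhs, rhs]
  have rhs2 : ∑ c, Q a c * ((if (c : ℕ) < j then (1:ℝ) else 0) * Q b c)
      = ∑ c ∈ Finset.univ.filter (fun c : Fin n => (c : ℕ) < j), Q a c * Q b c := by
    rw [Finset.sum_filter]
    refine Finset.sum_congr rfl fun c _ => ?_
    split_ifs <;> ring
  rw [rhs2]
  refine Finset.sum_bij' (fun (l : Fin j) _ => (⟨l.1, lt_of_lt_of_le l.2 h⟩ : Fin n))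
    (fun (c : Fin n) hc => (⟨c.1, by simpa using hc⟩ : Fin j)) ?_ ?_ ?_ ?_ ?_
  · intro l _; simp [l.2]
  · intro c hc; simp
  · intro l _; rfl
  · intro c hc; rfl
  · intro l _; rfl

lemma norm_conj {n : ℕ} (hn : 0 < n) (Q : Matrix (Fin n) (Fin n) ℝ) (hQ : Qᵀ * Q = 1)
    (M : Matrix (Fin n) (Fin n) ℝ) : ‖Q * (M * Qᵀ)‖ = ‖M‖ := by
  have hQl : ∀ Z : Matrix (Fin n) (Fin n) ℝ, Qᵀ * (Q * Z) = Z := fun Z => by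
    rw [← Matrix.mul_assoc, hQ, Matrix.one_mul]
  have hone : ‖(1 : Matrix (Fin n) (Fin n) ℝ)‖ = 1 := by
    have h1 : ‖(1 : Matrix (Fin n) (Fin n) ℝ)ᵀ * 1‖ = ‖(1 : Matrix (Fin n) (Fin n) ℝ)‖ *
        ‖(1 : Matrix (Fin n) (Fin n) ℝ)‖ := norm_transpose_mul_self 1
    rw [Matrix.transpose_one, Matrix.mul_one] at h1
    have h2 : ‖(1 : Matrix (Fin n) (Fin n) ℝ)‖ ≠ 0 := by
      intro h0
      have h3 : (1 : Matrix (Fin n) (Fin n) ℝ) = 0 := norm_eq_zero.mp h0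
      have h4 := congrFun (congrFun h3 ⟨0, hn⟩) ⟨0, hn⟩
      rw [Matrix.one_apply_eq] at h4
      simp at h4
    have h5 : ‖(1 : Matrix (Fin n) (Fin n) ℝ)‖ * 1
        = ‖(1 : Matrix (Fin n) (Fin n) ℝ)‖ * ‖(1 : Matrix (Fin n) (Fin n) ℝ)‖ := by
      rw [mul_one, ← h1]
    exact (mul_left_cancel₀ h2 h5).symm
  have hQn : ‖Q‖ = 1 := by
    have h1 : ‖Qᵀ * Q‖ = ‖Q‖ * ‖Q‖ := norm_transpose_mul_self Q
    rw [hQ, hone] at h1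
    rcases mul_self_eq_one_iff.mp h1.symm with h | h
    · exact h
    · exfalso; have := norm_nonneg Q; rw [h] at this; linarith
  have hQtn : ‖Qᵀ‖ = 1 := by rw [norm_transpose, hQn]
  apply le_antisymm
  · calc ‖Q * (M * Qᵀ)‖ ≤ ‖Q‖ * ‖M * Qᵀ‖ := Matrix.l2_opNorm_mul _ _
    _ ≤ ‖Q‖ * (‖M‖ * ‖Qᵀ‖) :=
        mul_le_mul_of_nonneg_left (Matrix.l2_opNorm_mul _ _) (norm_nonneg _)
    _ = ‖M‖ := by rw [hQn, hQtn]; ring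
  · have hrec : M = Qᵀ * (Q * (M * Qᵀ) * Q) := by
      rw [Matrix.mul_assoc, Matrix.mul_assoc, hQ, Matrix.mul_one, hQl]
    calc ‖M‖ = ‖Qᵀ * (Q * (M * Qᵀ) * Q)‖ := by rw [← hrec]
    _ ≤ ‖Qᵀ‖ * ‖Q * (M * Qᵀ) * Q‖ := Matrix.l2_opNorm_mul _ _
    _ ≤ ‖Qᵀ‖ * (‖Q * (M * Qᵀ)‖ * ‖Q‖) :=
        mul_le_mul_of_nonneg_left (Matrix.l2_opNorm_mul _ _) (norm_nonneg _)
    _ = ‖Q * (M * Qᵀ)‖ := by rw [hQn, hQtn]; ring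

lemma reduction {n : ℕ} (Q G : Matrix (Fin n) (Fin n) ℝ) (hQ : Qᵀ * Q = 1)
    (hGzero : ∀ i l : Fin n, (l : ℕ) + 2 ≤ (i : ℕ) → G i l = 0)
    (j : ℕ) (hj1 : j + 1 ≤ n) (hj0 : j ≤ n) :
    Q * (G * Qᵀ) -
      colSub Q (j + 1) hj1 * (colSub Q (j + 1) hj1)ᵀ * (Q * (G * Qᵀ)) *
        (colSub Q j hj0 * (colSub Q j hj0)ᵀ) =
      Q * (G * Pmat n j * Qᵀ) := by
  have hQl : ∀ Z : Matrix (Fin n) (Fin n) ℝ, Qᵀ * (Q * Z) = Z := fun Z => by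
    rw [← Matrix.mul_assoc, hQ, Matrix.one_mul]
  rw [colSub_mul_transpose, colSub_mul_transpose]
  have h1 : Q * (Dmat n (j + 1) * Qᵀ) * (Q * (G * Qᵀ)) * (Q * (Dmat n j * Qᵀ))
      = Q * (Dmat n (j + 1) * (G * (Dmat n j * Qᵀ))) := by
    simp only [Matrix.mul_assoc]
    rw [hQl, hQl]
  rw [h1, ← Matrix.mul_sub]
  congr 1
  have h2 : G * Qᵀ - Dmat n (j + 1) * (G * (Dmat n j * Qᵀ))
      = (G - Dmat n (j + 1) * (G * Dmat n j)) * Qᵀ := by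
    rw [Matrix.sub_mul]
    congr 1
    simp only [Matrix.mul_assoc]
  rw [h2]
  have h3 : G - Dmat n (j + 1) * (G * Dmat n j) = G * Pmat n j := by
    ext i l
    simp only [Matrix.sub_apply, Dmat, Pmat, Matrix.diagonal_mul, Matrix.mul_diagonal]
    split_ifs
    all_goals try (exfalso; omega)
    all_goals try ring
    all_goals exact hGzero i l (by omega)
  rw [h3, Matrix.mul_assoc]



end LSMR

/-- the LSMR approximation errors to `AᵀA` strictly decrease:
for `1 ≤ k ≤ n-2`. -/
theorem lsmr_rank_k_approx_error_strict_decreasing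
    (m n : ℕ) (hn : 2 ≤ n) (hmn : n < m)
    (A : Matrix (Fin m) (Fin n) ℝ)
    (P : Matrix (Fin m) (Fin (n + 1)) ℝ) (hP : Pᵀ * P = 1)
    (Q : Matrix (Fin n) (Fin n) ℝ) (hQ : Qᵀ * Q = 1)
    (α : Fin n → ℝ) (hα : ∀ i, 0 < α i)
    (β : Fin n → ℝ) (hβ : ∀ i, 0 < β i)
    (B : Matrix (Fin (n + 1)) (Fin n) ℝ)
    (hB : ∀ (i : Fin (n + 1)) (j : Fin n),
      B i j = if (i : ℕ) = (j : ℕ) then α j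
        else if (i : ℕ) = (j : ℕ) + 1 then β j else 0)
    (hA : A = P * B * Qᵀ)
    (σ : Fin n → ℝ) (hσpos : ∀ i, 0 < σ i)
    (hσstrict : ∀ i j : Fin n, i < j → σ j < σ i)
    (hσ : ∀ i : Fin n, σ i = singVal A ((i : ℕ) + 1))
    (k : ℕ) (hk1 : 1 ≤ k) (hk2 : k ≤ n - 2) :
    specNorm (Aᵀ * A -
        colSub Q (k + 2) (by omega) * (colSub Q (k + 2) (by omega))ᵀ * (Aᵀ * A) *
          (colSub Q (k + 1) (by omega) * (colSub Q (k + 1) (by omega))ᵀ)) <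
      specNorm (Aᵀ * A -
        colSub Q (k + 1) (by omega) * (colSub Q (k + 1) (by omega))ᵀ * (Aᵀ * A) *
          (colSub Q k (by omega) * (colSub Q k (by omega))ᵀ)) := by
  have hn0 : 0 < n := by omega
  have hBnn : ∀ (l : Fin (n + 1)) (i : Fin n), 0 ≤ B l i := by
    intro l i
    rw [hB]
    split_ifs
    · exact le_of_lt (hα i)
    · exact le_of_lt (hβ i)
    · exact le_refl 0
  have hGentry : ∀ i j : Fin n, (Bᵀ * B) i j = ∑ l, B l i * B l j := fun i j => rfl
  have hGnn : ∀ i j : Fin n, 0 ≤ (Bᵀ * B) i j := by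
    intro i j
    rw [hGentry]
    exact Finset.sum_nonneg fun l _ => mul_nonneg (hBnn l i) (hBnn l j)
  have hGdiag : ∀ i : Fin n, 0 < (Bᵀ * B) i i := by
    intro i
    rw [hGentry]
    refine Finset.sum_pos' (fun l _ => mul_nonneg (hBnn l i) (hBnn l i)) ?_
    refine ⟨⟨(i : ℕ), by omega⟩, Finset.mem_univ _, ?_⟩
    have e : B ⟨(i : ℕ), by omega⟩ i = α i := by rw [hB, if_pos rfl]
    rw [e]
    exact mul_pos (hα i) (hα i)
  have hGsup : ∀ (j : ℕ) (hj : j + 1 < n), 0 < (Bᵀ * B) ⟨j, by omega⟩ ⟨j + 1, hj⟩ := by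
    intro j hj
    rw [hGentry]
    refine Finset.sum_pos' (fun l _ => mul_nonneg (hBnn _ _) (hBnn _ _)) ?_
    refine ⟨⟨j + 1, by omega⟩, Finset.mem_univ _, ?_⟩
    have e1 : B ⟨j + 1, by omega⟩ ⟨j, by omega⟩ = β ⟨j, by omega⟩ := by
      rw [hB, if_neg (show ¬(j + 1 = j) by omega), if_pos rfl]
    have e2 : B ⟨j + 1, by omega⟩ ⟨j + 1, hj⟩ = α ⟨j + 1, hj⟩ := by
      rw [hB, if_pos rfl]
    rw [e1, e2]
    exact mul_pos (hβ _) (hα _)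
  have hGzero : ∀ i l : Fin n, (l : ℕ) + 2 ≤ (i : ℕ) → (Bᵀ * B) i l = 0 := by
    intro i l hil
    rw [hGentry]
    refine Finset.sum_eq_zero fun m _ => ?_
    rw [hB, hB]
    split_ifs
    all_goals try (exfalso; omega)
    all_goals ring
  have hPl : ∀ Z : Matrix (Fin (n + 1)) (Fin n) ℝ, Pᵀ * (P * Z) = Z := fun Z => by
    rw [← Matrix.mul_assoc, hP, Matrix.one_mul]
  have hAA : Aᵀ * A = Q * (Bᵀ * B * Qᵀ) := by
    rw [hA]
    simp only [Matrix.transpose_mul, Matrix.transpose_transpose, Matrix.mul_assoc]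
    rw [hPl]
  have hspec : ∀ M : Matrix (Fin n) (Fin n) ℝ, specNorm M = ‖M‖ := fun _ => rfl
  have hred1 : Q * (Bᵀ * B * Qᵀ) -
      colSub Q (k + 1) (by omega) * (colSub Q (k + 1) (by omega))ᵀ * (Q * (Bᵀ * B * Qᵀ)) *
        (colSub Q k (by omega) * (colSub Q k (by omega))ᵀ) =
      Q * (Bᵀ * B * LSMR.Pmat n k * Qᵀ) :=
    LSMR.reduction Q (Bᵀ * B) hQ hGzero k (by omega) (by omega)
  have hred2 : Q * (Bᵀ * B * Qᵀ) -
      colSub Q (k + 2) (by omega) * (colSub Q (k + 2) (by omega))ᵀ * (Q * (Bᵀ * B * Qᵀ)) *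
        (colSub Q (k + 1) (by omega) * (colSub Q (k + 1) (by omega))ᵀ) =
      Q * (Bᵀ * B * LSMR.Pmat n (k + 1) * Qᵀ) :=
    LSMR.reduction Q (Bᵀ * B) hQ hGzero (k + 1) (by omega) (by omega)
  rw [hspec, hspec, hAA, hred2, hred1,
    LSMR.norm_conj hn0 Q hQ (Bᵀ * B * LSMR.Pmat n (k + 1)),
    LSMR.norm_conj hn0 Q hQ (Bᵀ * B * LSMR.Pmat n k)]
  exact LSMR.core k (by omega) (Bᵀ * B) hGnn hGdiag hGsup
end
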